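/- arXiv:1112.0620 — 5 statements merged into one kernel-verified Lean document; each statement's English description precedes it below -/
import Mathlib

section
/- (Hook–content identity underlying the hook dimension formula.) Let λ be a Young diagram and (k,l) a box of λ such that μ := λ with the box (k,l) removed is again a Young diagram (i.e. l = λ_k and k = λ'_l). For a Young diagram ν put d_ν(i,j) := ν_i + ν_j − i − j + 1 if i ≤ j and d_ν(i,j) := −ν'_i − ν'_j + i + j − 1 if i > j. For t ∈ ℂ set c★ := (t−1)/2 + l − k and c(i,j) := (t−1)/2 + j − i. Then for every t ∈ ℂ for which c★ ≠ 0 and c★ + c(i,j) ≠ 0 for all (i,j) ∈ μ and ∏_{(i,j)∈μ}(t − 1 + d_μ(i,j)) ≠ 0, one has: (c★ + (t−1)/2)·(2c★ + 1)/(2c★) · ∏_{(i,j)∈μ} ((c★ + c(i,j))^2 − 1)/((c★ + c(i,j))^2) = ∏_{(i,j)∈λ}(t − 1 + d_λ(i,j)) / ∏_{(i,j)∈μ}(t − 1 + d_μ(i,j)). -/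
open Finset

noncomputable section

/-- The quantity `d_ν(i,j)` of the hook dimension formula, for the 0-indexed box
`b = (i₀, j₀)` (so `i = i₀ + 1`, `j = j₀ + 1` in 1-indexed terms):
`d_ν(i,j) = ν_i + ν_j - i - j + 1` if `i ≤ j`, and
`d_ν(i,j) = -ν'_i - ν'_j + i + j - 1` if `i > j`. -/
def dval (ν : YoungDiagram) (b : ℕ × ℕ) : ℤ :=
  if b.1 ≤ b.2 then (ν.rowLen b.1 : ℤ) + ν.rowLen b.2 - b.1 - b.2 - 1
  else -(ν.colLen b.1 : ℤ) - ν.colLen b.2 + b.1 + b.2 + 1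

namespace HCI

variable (μ : YoungDiagram) (z : ℂ)

/-- `U x = z + rowLen x - x`. -/
def Us (x : ℕ) : ℂ := z + μ.rowLen x - x
/-- `V x = z + x - colLen x`. -/
def Vs (x : ℕ) : ℂ := z + x - μ.colLen x

def Nn (n : ℕ) : ℂ :=
  Us μ z n * (∏ x ∈ range n, Us μ z x) * ∏ x ∈ range (μ.rowLen n), Vs μ z x

def Dn (n : ℕ) : ℂ :=
  (∏ x ∈ range n, (Us μ z x - 1)) * ∏ x ∈ range (μ.rowLen n), (Vs μ z x + 1)

lemma prod_shift (w : ℂ) (r : ℕ) :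
    w * ∏ j ∈ range r, (w + (j + 1 : ℕ)) = (w + r) * ∏ j ∈ range r, (w + j) := by
  induction r with
  | zero => simp
  | succ r ih =>
    rw [prod_range_succ, prod_range_succ, ← mul_assoc, ih]
    push_cast
    ring

lemma ico_shift (w : ℂ) (a b : ℕ) (hab : a ≤ b) :
    (w + b) * ∏ y ∈ Finset.Ico a b, (w + y) =
      (w + a) * ∏ y ∈ Finset.Ico a b, (w + y + 1) := by
  induction b, hab using Nat.le_induction with
  | base => simp
  | succ b hab ih =>
    rw [prod_Ico_succ_top (by omega), prod_Ico_succ_top (by omega)]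
    push_cast
    linear_combination (w + (b:ℂ) + 1) * ih

lemma colLen_eq_of {m y : ℕ} (hle : μ.rowLen m ≤ y) (hgt : ∀ i, i < m → y < μ.rowLen i) :
    μ.colLen y = m := by
  refine le_antisymm ?_ ?_
  · by_contra h
    push_neg at h
    have : (m, y) ∈ μ := YoungDiagram.mem_iff_lt_colLen.2 h
    exact absurd (YoungDiagram.mem_iff_lt_rowLen.1 this) (by omega)
  · rcases Nat.eq_zero_or_pos m with hm | hm
    · omega
    · have : (m - 1, y) ∈ μ := YoungDiagram.mem_iff_lt_rowLen.2 (hgt _ (by omega))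
      have := YoungDiagram.mem_iff_lt_colLen.1 this
      omega

lemma colLen_between {m y : ℕ} (h1 : μ.rowLen (m+1) ≤ y) (h2 : y < μ.rowLen m) :
    μ.colLen y = m + 1 :=
  colLen_eq_of μ h1 (fun i hi => lt_of_lt_of_le h2 (μ.rowLen_anti i m (by omega)))

lemma T1 (n m : ℕ) (hnm : n ≤ m) :
    Us μ z n * (∏ x ∈ Finset.Ico n m, (Us μ z x - 1)) *
      ∏ y ∈ Finset.Ico (μ.rowLen m) (μ.rowLen n), Vs μ z y =
    Us μ z m * (∏ x ∈ Finset.Ico n m, Us μ z x) *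
      ∏ y ∈ Finset.Ico (μ.rowLen m) (μ.rowLen n), (Vs μ z y + 1) := by
  induction m, hnm using Nat.le_induction with
  | base => simp
  | succ m hnm ih =>
    have hab : μ.rowLen (m+1) ≤ μ.rowLen m := μ.rowLen_anti m (m+1) (by omega)
    have hbc : μ.rowLen m ≤ μ.rowLen n := μ.rowLen_anti n m hnm
    set w : ℂ := z - (m : ℂ) - 1 with hw
    have hq : ∏ y ∈ Finset.Ico (μ.rowLen (m+1)) (μ.rowLen m), Vs μ z y =
        ∏ y ∈ Finset.Ico (μ.rowLen (m+1)) (μ.rowLen m), (w + y) := by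
      refine prod_congr rfl fun y hy => ?_
      rw [mem_Ico] at hy
      rw [Vs, colLen_between μ hy.1 hy.2]
      push_cast; ring
    have hq' : ∏ y ∈ Finset.Ico (μ.rowLen (m+1)) (μ.rowLen m), (Vs μ z y + 1) =
        ∏ y ∈ Finset.Ico (μ.rowLen (m+1)) (μ.rowLen m), (w + y + 1) := by
      refine prod_congr rfl fun y hy => ?_
      rw [mem_Ico] at hy
      rw [Vs, colLen_between μ hy.1 hy.2]
      push_cast; ring
    have hs := ico_shift w (μ.rowLen (m+1)) (μ.rowLen m) hab
    have hum : Us μ z m - 1 = w + (μ.rowLen m : ℂ) := by rw [Us]; ring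
    have hum' : Us μ z (m+1) = w + (μ.rowLen (m+1) : ℂ) := by rw [Us]; push_cast; ring
    rw [prod_Ico_succ_top (a := n) (b := m) hnm (fun x => Us μ z x - 1),
      prod_Ico_succ_top (a := n) (b := m) hnm (fun x => Us μ z x),
      ← prod_Ico_consecutive _ hab hbc,
      ← prod_Ico_consecutive (fun y => Vs μ z y + 1) hab hbc,
      hq, hq', hum, hum']
    linear_combination
      ((w + (μ.rowLen m : ℂ)) * ∏ y ∈ Finset.Ico (μ.rowLen (m+1)) (μ.rowLen m), (w + y)) * ih +
      (Us μ z m * (∏ x ∈ Finset.Ico n m, Us μ z x) *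
        ∏ y ∈ Finset.Ico (μ.rowLen m) (μ.rowLen n), (Vs μ z y + 1)) * hs

lemma NDswap (n m : ℕ) (hnm : n ≤ m) :
    Nn μ z n * Dn μ z m = Nn μ z m * Dn μ z n := by
  have hbc : μ.rowLen m ≤ μ.rowLen n := μ.rowLen_anti n m hnm
  rw [Nn, Nn, Dn, Dn]; simp only [range_eq_Ico]
  rw [← prod_Ico_consecutive (fun x => Us μ z x - 1) (Nat.zero_le n) hnm,
    ← prod_Ico_consecutive (fun y => Vs μ z y) (Nat.zero_le (μ.rowLen m)) hbc,
    ← prod_Ico_consecutive (fun x => Us μ z x) (Nat.zero_le n) hnm,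
    ← prod_Ico_consecutive (fun y => Vs μ z y + 1) (Nat.zero_le (μ.rowLen m)) hbc]
  linear_combination
    ((∏ x ∈ Finset.Ico 0 n, Us μ z x) * (∏ y ∈ Finset.Ico 0 (μ.rowLen m), Vs μ z y) *
      (∏ x ∈ Finset.Ico 0 n, (Us μ z x - 1)) *
      ∏ y ∈ Finset.Ico 0 (μ.rowLen m), (Vs μ z y + 1)) *
    T1 μ z n m hnm

lemma mem_lt_colLen0 {b : ℕ × ℕ} (hb : b ∈ μ.cells) : b.1 < μ.colLen 0 :=
  lt_of_lt_of_le (YoungDiagram.mem_iff_lt_colLen.1 (by simpa using hb))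
    (μ.colLen_anti 0 b.2 (Nat.zero_le _))

lemma cells_eq_biUnion :
    μ.cells = (range (μ.colLen 0)).biUnion (fun i => μ.row i) := by
  ext ⟨i, j⟩
  simp only [Finset.mem_biUnion, Finset.mem_range, YoungDiagram.mem_row_iff]
  constructor
  · intro h
    exact ⟨i, mem_lt_colLen0 μ h, (YoungDiagram.mem_cells _).1 h, rfl⟩
  · rintro ⟨i', _, h, rfl⟩
    exact (YoungDiagram.mem_cells _).2 h

lemma prod_cells (f : ℕ × ℕ → ℂ) :
    ∏ b ∈ μ.cells, f b =
      ∏ i ∈ range (μ.colLen 0), ∏ j ∈ range (μ.rowLen i), f (i, j) := by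
  rw [cells_eq_biUnion μ, Finset.prod_biUnion]
  · refine prod_congr rfl fun i _ => ?_
    rw [YoungDiagram.row_eq_prod, Finset.singleton_product, Finset.prod_map]
    rfl
  · intro a _ b _ hab
    simp only [Finset.disjoint_left, YoungDiagram.mem_row_iff]
    rintro ⟨i, j⟩ ⟨_, rfl⟩ ⟨_, h⟩
    exact hab h

lemma rowLen_top : μ.rowLen (μ.colLen 0) = 0 := by
  by_contra h
  have : (μ.colLen 0, 0) ∈ μ := YoungDiagram.mem_iff_lt_rowLen.2 (Nat.pos_of_ne_zero h)
  have := YoungDiagram.mem_iff_lt_colLen.1 this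
  omega

lemma row_core (i r : ℕ) :
    (z + r - i - 1) * (z - i) *
        ∏ j ∈ range r, ((z + j - i) ^ 2 - 1) =
      (z - i - 1) * (z + r - i) * ∏ j ∈ range r, (z + j - i) ^ 2 := by
  have hAneg : (z - i - 1) * ∏ j ∈ range r, (z + j - i) =
      (z + r - i - 1) * ∏ j ∈ range r, (z + j - i - 1) := by
    have := prod_shift (z - i - 1) r
    rw [show ∏ j ∈ range r, (z - (i:ℂ) - 1 + (j + 1 : ℕ)) = ∏ j ∈ range r, (z + j - i) from
      prod_congr rfl fun j _ => by push_cast; ring] at this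
    rw [show ∏ j ∈ range r, (z - (i:ℂ) - 1 + j) = ∏ j ∈ range r, (z + j - i - 1) from
      prod_congr rfl fun j _ => by push_cast; ring] at this
    linear_combination this
  have hApos : (z - i) * ∏ j ∈ range r, (z + j - i + 1) =
      (z + r - i) * ∏ j ∈ range r, (z + j - i) := by
    have := prod_shift (z - i) r
    rw [show ∏ j ∈ range r, (z - (i:ℂ) + (j + 1 : ℕ)) = ∏ j ∈ range r, (z + j - i + 1) from
      prod_congr rfl fun j _ => by push_cast; ring] at this
    rw [show ∏ j ∈ range r, (z - (i:ℂ) + j) = ∏ j ∈ range r, (z + j - i) from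
      prod_congr rfl fun j _ => by push_cast; ring] at this
    linear_combination this
  have hsplit : ∏ j ∈ range r, ((z + j - i) ^ 2 - 1) =
      (∏ j ∈ range r, (z + j - i - 1)) * ∏ j ∈ range r, (z + j - i + 1) := by
    rw [← prod_mul_distrib]
    exact prod_congr rfl fun j _ => by ring
  have hsq : ∏ j ∈ range r, (z + j - i) ^ 2 =
      (∏ j ∈ range r, (z + j - i)) * ∏ j ∈ range r, (z + j - i) := by
    rw [← prod_mul_distrib]
    exact prod_congr rfl fun j _ => by ring
  rw [hsplit, hsq]
  linear_combination
    (-(z - (i:ℂ)) * ∏ j ∈ range r, (z + j - i + 1)) * hAneg +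
    ((z - (i:ℂ) - 1) * ∏ j ∈ range r, (z + j - i)) * hApos

lemma telescope_z (R : ℕ) :
    (∏ i ∈ range R, (z - i - 1)) * z = (z - R) * ∏ i ∈ range R, (z - i) := by
  have h1 := prod_range_succ (fun i => z - i) R
  have h2 := prod_range_succ' (fun i => z - i) R
  rw [show ∏ i ∈ range R, (z - ((i:ℕ) + 1 : ℕ)) = ∏ i ∈ range R, (z - i - 1) from
    prod_congr rfl fun j _ => by push_cast; ring] at h2
  push_cast at h1 h2 ⊢
  linear_combination h1 - h2

lemma base_identity :
    (∏ i ∈ range (μ.colLen 0), (z - i)) *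
        (z * (∏ b ∈ μ.cells, ((z + b.2 - b.1) ^ 2 - 1)) * Dn μ z (μ.colLen 0)) =
      (∏ i ∈ range (μ.colLen 0), (z - i)) *
        ((∏ b ∈ μ.cells, (z + b.2 - b.1) ^ 2) * Nn μ z (μ.colLen 0)) := by
  set R := μ.colLen 0 with hR
  rw [prod_cells μ (fun b => ((z + b.2 - b.1) ^ 2 - 1)),
    prod_cells μ (fun b => (z + b.2 - b.1) ^ 2)]
  rw [Nn, Dn, rowLen_top μ]
  simp only [range_zero, prod_empty, mul_one]
  have hrow : ∏ i ∈ range R, ((Us μ z i - 1) * (z - i) *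
        ∏ j ∈ range (μ.rowLen i), ((z + j - i) ^ 2 - 1)) =
      ∏ i ∈ range R, ((z - i - 1) * Us μ z i *
        ∏ j ∈ range (μ.rowLen i), (z + j - i) ^ 2) := by
    refine prod_congr rfl fun i _ => ?_
    have := row_core z i (μ.rowLen i)
    rw [Us]
    linear_combination this
  simp only [prod_mul_distrib] at hrow
  have hU0 : Us μ z R = z - R := by rw [Us, rowLen_top μ]; push_cast; ring
  rw [hU0]
  have htel := telescope_z z R
  linear_combination z * hrow +
    ((∏ x ∈ range R, Us μ z x) *
      ∏ i ∈ range R, ∏ j ∈ range (μ.rowLen i), (z + (j:ℂ) - i) ^ 2) * htel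

section Structural

variable {lam mu : YoungDiagram} {k₀ l₀ : ℕ}

lemma mem_mu_iff (hmu : mu.cells = lam.cells.erase (k₀, l₀)) (b : ℕ × ℕ) :
    b ∈ mu ↔ b ∈ lam ∧ b ≠ (k₀, l₀) := by
  rw [← YoungDiagram.mem_cells, hmu, Finset.mem_erase, YoungDiagram.mem_cells]
  tauto

lemma not_mem_mu (hmu : mu.cells = lam.cells.erase (k₀, l₀)) : (k₀, l₀) ∉ mu :=
  fun h => ((mem_mu_iff hmu _).1 h).2 rfl

lemma mem_mu_of_ne (hmu : mu.cells = lam.cells.erase (k₀, l₀)) {b : ℕ × ℕ}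
    (hb : b ∈ lam) (hne : b ≠ (k₀, l₀)) : b ∈ mu :=
  (mem_mu_iff hmu b).2 ⟨hb, hne⟩

lemma mu_rowLen_k (hbox : (k₀, l₀) ∈ lam) (hmu : mu.cells = lam.cells.erase (k₀, l₀)) :
    mu.rowLen k₀ = l₀ := by
  refine le_antisymm ?_ ?_
  · by_contra h
    push_neg at h
    exact not_mem_mu hmu (YoungDiagram.mem_iff_lt_rowLen.2 h)
  · rcases Nat.eq_zero_or_pos l₀ with h | h
    · omega
    · have h1 : (k₀, l₀ - 1) ∈ mu := by
        refine mem_mu_of_ne hmu (lam.up_left_mem le_rfl (by omega) hbox) ?_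
        simp only [ne_eq, Prod.mk.injEq, not_and]
        omega
      have := YoungDiagram.mem_iff_lt_rowLen.1 h1
      omega

lemma lam_rowLen_k (hbox : (k₀, l₀) ∈ lam) (hmu : mu.cells = lam.cells.erase (k₀, l₀)) :
    lam.rowLen k₀ = l₀ + 1 := by
  refine le_antisymm ?_ ?_
  · by_contra h
    push_neg at h
    have h1 : (k₀, l₀ + 1) ∈ lam := YoungDiagram.mem_iff_lt_rowLen.2 h
    have h2 : (k₀, l₀ + 1) ∈ mu := mem_mu_of_ne hmu h1 (by simp)
    exact not_mem_mu hmu (mu.up_left_mem le_rfl (Nat.le_succ _) h2)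
  · exact YoungDiagram.mem_iff_lt_rowLen.1 hbox

lemma mu_colLen_l (hbox : (k₀, l₀) ∈ lam) (hmu : mu.cells = lam.cells.erase (k₀, l₀)) :
    mu.colLen l₀ = k₀ := by
  refine le_antisymm ?_ ?_
  · by_contra h
    push_neg at h
    exact not_mem_mu hmu (YoungDiagram.mem_iff_lt_colLen.2 h)
  · rcases Nat.eq_zero_or_pos k₀ with h | h
    · omega
    · have h1 : (k₀ - 1, l₀) ∈ mu := by
        refine mem_mu_of_ne hmu (lam.up_left_mem (by omega) le_rfl hbox) ?_
        simp only [ne_eq, Prod.mk.injEq, not_and']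
        omega
      have := YoungDiagram.mem_iff_lt_colLen.1 h1
      omega

lemma lam_colLen_l (hbox : (k₀, l₀) ∈ lam) (hmu : mu.cells = lam.cells.erase (k₀, l₀)) :
    lam.colLen l₀ = k₀ + 1 := by
  refine le_antisymm ?_ ?_
  · by_contra h
    push_neg at h
    have h1 : (k₀ + 1, l₀) ∈ lam := YoungDiagram.mem_iff_lt_colLen.2 h
    have h2 : (k₀ + 1, l₀) ∈ mu := mem_mu_of_ne hmu h1 (by simp)
    exact not_mem_mu hmu (mu.up_left_mem (Nat.le_succ _) le_rfl h2)
  · exact YoungDiagram.mem_iff_lt_colLen.1 hbox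

lemma rowLen_eq_lam (hmu : mu.cells = lam.cells.erase (k₀, l₀)) {i : ℕ} (hi : i ≠ k₀) :
    mu.rowLen i = lam.rowLen i := by
  refine le_antisymm ?_ ?_
  · by_contra h
    push_neg at h
    have h1 : (i, lam.rowLen i) ∈ mu := YoungDiagram.mem_iff_lt_rowLen.2 h
    exact absurd (YoungDiagram.mem_iff_lt_rowLen.1 ((mem_mu_iff hmu _).1 h1).1) (lt_irrefl _)
  · by_contra h
    push_neg at h
    have h1 : (i, mu.rowLen i) ∈ lam := YoungDiagram.mem_iff_lt_rowLen.2 h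
    have h2 : (i, mu.rowLen i) ∈ mu := mem_mu_of_ne hmu h1 (by simp [hi])
    exact absurd (YoungDiagram.mem_iff_lt_rowLen.1 h2) (lt_irrefl _)

lemma colLen_eq_lam (hmu : mu.cells = lam.cells.erase (k₀, l₀)) {j : ℕ} (hj : j ≠ l₀) :
    mu.colLen j = lam.colLen j := by
  refine le_antisymm ?_ ?_
  · by_contra h
    push_neg at h
    have h1 : (lam.colLen j, j) ∈ mu := YoungDiagram.mem_iff_lt_colLen.2 h
    exact absurd (YoungDiagram.mem_iff_lt_colLen.1 ((mem_mu_iff hmu _).1 h1).1) (lt_irrefl _)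
  · by_contra h
    push_neg at h
    have h1 : (mu.colLen j, j) ∈ lam := YoungDiagram.mem_iff_lt_colLen.2 h
    have h2 : (mu.colLen j, j) ∈ mu := mem_mu_of_ne hmu h1 (by simp [hj])
    exact absurd (YoungDiagram.mem_iff_lt_colLen.1 h2) (lt_irrefl _)

end Structural

/-- The unified package of data extracted from the corner box analysis. -/
def Concl (lam mu : YoungDiagram) (k₀ l₀ : ℕ) (z : ℂ) : Prop :=
  ∃ (S : Finset (ℕ × ℕ)) (n₀ : ℕ) (W : ℂ),
    S ⊆ mu.cells ∧
    (∀ b ∈ mu.cells, b ∉ S → dval lam b = dval mu b) ∧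
    (z + ((l₀ : ℂ) - k₀) + 1) * ∏ b ∈ S, (z - ((l₀ : ℂ) - k₀) + (dval mu b : ℂ)) =
      Dn mu z n₀ * W ∧
    (z + ((l₀ : ℂ) - k₀)) * (z - ((l₀ : ℂ) - k₀) + (dval lam (k₀, l₀) : ℂ)) *
        ∏ b ∈ S, (z - ((l₀ : ℂ) - k₀) + (dval lam b : ℂ)) =
      Nn mu z n₀ * W

lemma caseA (lam mu : YoungDiagram) (k₀ l₀ : ℕ)
    (hbox : (k₀, l₀) ∈ lam) (hmu : mu.cells = lam.cells.erase (k₀, l₀))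
    (hkl : k₀ ≤ l₀) (z : ℂ) : Concl lam mu k₀ l₀ z := by
  have hrmk : mu.rowLen k₀ = l₀ := mu_rowLen_k hbox hmu
  have hrlk : lam.rowLen k₀ = l₀ + 1 := lam_rowLen_k hbox hmu
  have hcml : mu.colLen l₀ = k₀ := mu_colLen_l hbox hmu
  have hcll : lam.colLen l₀ = k₀ + 1 := lam_colLen_l hbox hmu
  have hre : ∀ i : ℕ, i ≠ k₀ → mu.rowLen i = lam.rowLen i := fun i hi => rowLen_eq_lam hmu hi
  have hce : ∀ j : ℕ, j ≠ l₀ → mu.colLen j = lam.colLen j := fun j hj => colLen_eq_lam hmu hj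
  have hrll : mu.rowLen l₀ ≤ l₀ := hrmk ▸ mu.rowLen_anti k₀ l₀ hkl
  set A : ℂ := (l₀ : ℂ) - k₀ with hA
  set Srow : Finset (ℕ × ℕ) := (range l₀).image (fun x => (min x k₀, max x k₀)) with hSrow
  set Scol : Finset (ℕ × ℕ) := (range (mu.rowLen l₀)).image (fun x => (l₀, x)) with hScol
  -- memberships
  have hrowmem : ∀ x, x < l₀ → (min x k₀, max x k₀) ∈ mu := by
    intro x hx
    rcases Nat.lt_or_ge x k₀ with h | h
    · rw [min_eq_left (le_of_lt h), max_eq_right (le_of_lt h)]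
      refine YoungDiagram.mem_iff_lt_colLen.2 ?_
      have := mu.colLen_anti k₀ l₀ hkl
      omega
    · rw [min_eq_right h, max_eq_left h]
      exact YoungDiagram.mem_iff_lt_rowLen.2 (by omega)
  have hcolmem : ∀ x, x < mu.rowLen l₀ → (l₀, x) ∈ mu := by
    intro x hx
    exact YoungDiagram.mem_iff_lt_rowLen.2 hx
  -- injectivity
  have hrowinj : ∀ x ∈ range l₀, ∀ y ∈ range l₀,
      (min x k₀, max x k₀) = (min y k₀, max y k₀) → x = y := by
    intro x _ y _ h
    simp only [Prod.mk.injEq] at h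
    omega
  have hcolinj : ∀ x ∈ range (mu.rowLen l₀), ∀ y ∈ range (mu.rowLen l₀),
      ((l₀ : ℕ), x) = (l₀, y) → x = y := by
    intro x _ y _ h
    simpa using h
  -- disjointness
  have hdisj : Disjoint Srow Scol := by
    rw [Finset.disjoint_left]
    intro b hb hb'
    simp only [hSrow, hScol, Finset.mem_image, Finset.mem_range] at hb hb'
    obtain ⟨x, hx, rfl⟩ := hb
    obtain ⟨y, hy, h⟩ := hb'
    simp only [Prod.mk.injEq] at h
    omega
  -- values
  have hGrow : ∀ x, x < l₀ → z - A + (dval mu (min x k₀, max x k₀) : ℂ) = Us mu z x - 1 := by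
    intro x hx
    rcases le_total k₀ x with h | h
    · rw [min_eq_right h, max_eq_left h, dval]
      rw [if_pos (show (k₀, x).1 ≤ (k₀, x).2 from h), hrmk, Us]
      push_cast; ring
    · rw [min_eq_left h, max_eq_right h, dval]
      rw [if_pos (show (x, k₀).1 ≤ (x, k₀).2 from h), hrmk, Us]
      push_cast; ring
  have hFrow : ∀ x, x < l₀ → x ≠ k₀ → z - A + (dval lam (min x k₀, max x k₀) : ℂ) = Us mu z x := by
    intro x hx hxk
    rcases le_total k₀ x with h | h
    · rw [min_eq_right h, max_eq_left h, dval]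
      rw [if_pos (show (k₀, x).1 ≤ (k₀, x).2 from h), hrlk, ← hre x hxk, Us]
      push_cast; ring
    · rw [min_eq_left h, max_eq_right h, dval]
      rw [if_pos (show (x, k₀).1 ≤ (x, k₀).2 from h), hrlk, ← hre x hxk, Us]
      push_cast; ring
  have hGcol : ∀ x, x < mu.rowLen l₀ → z - A + (dval mu (l₀, x) : ℂ) = Vs mu z x + 1 := by
    intro x hx
    rw [dval, if_neg (show ¬ (l₀, x).1 ≤ (l₀, x).2 by simp only; omega), Vs]
    simp only [hcml]
    push_cast; ring
  have hFcol : ∀ x, x < mu.rowLen l₀ → z - A + (dval lam (l₀, x) : ℂ) = Vs mu z x := by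
    intro x hx
    rw [dval, if_neg (show ¬ (l₀, x).1 ≤ (l₀, x).2 by simp only; omega), Vs]
    rw [hcll, ← hce x (by omega)]
    push_cast; ring
  -- the products over Srow and Scol
  have hprodGrow : ∏ b ∈ Srow, (z - A + (dval mu b : ℂ)) = ∏ x ∈ range l₀, (Us mu z x - 1) := by
    rw [hSrow, Finset.prod_image hrowinj]
    exact prod_congr rfl fun x hx => hGrow x (mem_range.1 hx)
  have hprodGcol : ∏ b ∈ Scol, (z - A + (dval mu b : ℂ)) =
      ∏ x ∈ range (mu.rowLen l₀), (Vs mu z x + 1) := by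
    rw [hScol, Finset.prod_image hcolinj]
    exact prod_congr rfl fun x hx => hGcol x (mem_range.1 hx)
  have hprodFcol : ∏ b ∈ Scol, (z - A + (dval lam b : ℂ)) =
      ∏ x ∈ range (mu.rowLen l₀), Vs mu z x := by
    rw [hScol, Finset.prod_image hcolinj]
    exact prod_congr rfl fun x hx => hFcol x (mem_range.1 hx)
  refine ⟨Srow ∪ Scol, l₀, z + A + 1, ?_, ?_, ?_, ?_⟩
  · intro b hb
    rcases Finset.mem_union.1 hb with hb | hb <;>
      simp only [hSrow, hScol, Finset.mem_image, Finset.mem_range] at hb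
    · obtain ⟨x, hx, rfl⟩ := hb
      exact (YoungDiagram.mem_cells _).2 (hrowmem x hx)
    · obtain ⟨x, hx, rfl⟩ := hb
      exact (YoungDiagram.mem_cells _).2 (hcolmem x hx)
  · -- coverage
    rintro ⟨i, j⟩ hb hnS
    have hbmu : (i, j) ∈ mu := (YoungDiagram.mem_cells _).1 hb
    rw [dval, dval]
    rcases le_or_gt i j with hij | hij
    · rw [if_pos hij, if_pos hij]
      have hik : i ≠ k₀ := by
        rintro rfl
        have hjl : j < l₀ := by
          have := YoungDiagram.mem_iff_lt_rowLen.1 hbmu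
          omega
        exact hnS (Finset.mem_union_left _ (Finset.mem_image.2 ⟨j, mem_range.2 hjl,
          by rw [min_eq_right hij, max_eq_left hij]⟩))
      have hjk : j ≠ k₀ := by
        rintro rfl
        have hil : i < l₀ := by omega
        exact hnS (Finset.mem_union_left _ (Finset.mem_image.2 ⟨i, mem_range.2 hil,
          by rw [min_eq_left hij, max_eq_right hij]⟩))
      rw [hre i hik, hre j hjk]
    · rw [if_neg (by omega), if_neg (by omega)]
      have hil : i ≠ l₀ := by
        intro h
        refine hnS (Finset.mem_union_right _ (Finset.mem_image.2 ⟨j, mem_range.2 ?_, ?_⟩))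
        · rw [← h]
          exact YoungDiagram.mem_iff_lt_rowLen.1 hbmu
        · rw [h]
      have hjl : j ≠ l₀ := by
        intro h
        have h2 := YoungDiagram.mem_iff_lt_colLen.1 hbmu
        rw [h, hcml] at h2
        omega
      rw [hce i hil, hce j hjl]
  · -- the G product
    rw [Finset.prod_union hdisj, hprodGrow, hprodGcol, Dn]
    ring
  · -- the F product
    rw [Finset.prod_union hdisj, hprodFcol, Nn]
    rcases eq_or_lt_of_le hkl with heq | hkl'
    · -- k₀ = l₀
      have hA0 : A = 0 := by rw [hA, heq]; ring
      have hprodFrow : ∏ b ∈ Srow, (z - A + (dval lam b : ℂ)) =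
          ∏ x ∈ range l₀, Us mu z x := by
        rw [hSrow, Finset.prod_image hrowinj]
        refine prod_congr rfl fun x hx => hFrow x (mem_range.1 hx) ?_
        have := mem_range.1 hx
        omega
      have hlaml : lam.rowLen l₀ = l₀ + 1 := by
        rw [← heq, hrlk]
        omega
      have hstar : z - A + (dval lam (k₀, l₀) : ℂ) = z + 1 := by
        rw [dval, if_pos hkl, hrlk, hlaml, hA]
        push_cast; ring
      have hUl : Us mu z l₀ = z := by
        have h0 : mu.rowLen l₀ = l₀ := by rw [← heq, hrmk]; exact heq.symm
        rw [Us, h0]; ring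
      have hcast : (k₀ : ℂ) = l₀ := by rw [heq]
      rw [hprodFrow, hstar, hUl, hA, hcast]
      ring
    · -- k₀ < l₀
      have hkmem : k₀ ∈ range l₀ := mem_range.2 hkl'
      have hFrowk : z - A + (dval lam (min k₀ k₀, max k₀ k₀) : ℂ) = z + A + 1 := by
        rw [min_self, max_self, dval, if_pos le_rfl, hrlk]
        push_cast; ring
      have hprodFrow : ∏ b ∈ Srow, (z - A + (dval lam b : ℂ)) =
          (z + A + 1) * ∏ x ∈ (range l₀).erase k₀, Us mu z x := by
        rw [hSrow, Finset.prod_image hrowinj]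
        rw [← Finset.mul_prod_erase (range l₀) _ hkmem, hFrowk]
        congr 1
        refine prod_congr rfl fun x hx => ?_
        exact hFrow x (mem_range.1 (Finset.mem_of_mem_erase hx)) (Finset.ne_of_mem_erase hx)
      have hUk : Us mu z k₀ = z + A := by
        rw [Us, hrmk, hA]; ring
      have hUsplit : ∏ x ∈ range l₀, Us mu z x = (z + A) * ∏ x ∈ (range l₀).erase k₀, Us mu z x := by
        rw [← Finset.mul_prod_erase (range l₀) _ hkmem, hUk]
      have hstar : z - A + (dval lam (k₀, l₀) : ℂ) = Us mu z l₀ := by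
        rw [dval, if_pos (show (k₀, l₀).1 ≤ (k₀, l₀).2 from hkl), hrlk, ← hre l₀ (by omega), Us]
        push_cast; ring
      rw [hprodFrow, hstar, hUsplit]
      ring

lemma caseB (lam mu : YoungDiagram) (k₀ l₀ : ℕ)
    (hbox : (k₀, l₀) ∈ lam) (hmu : mu.cells = lam.cells.erase (k₀, l₀))
    (hkl : l₀ < k₀) (z : ℂ) : Concl lam mu k₀ l₀ z := by
  have hrmk : mu.rowLen k₀ = l₀ := mu_rowLen_k hbox hmu
  have hrlk : lam.rowLen k₀ = l₀ + 1 := lam_rowLen_k hbox hmu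
  have hcml : mu.colLen l₀ = k₀ := mu_colLen_l hbox hmu
  have hcll : lam.colLen l₀ = k₀ + 1 := lam_colLen_l hbox hmu
  have hre : ∀ i : ℕ, i ≠ k₀ → mu.rowLen i = lam.rowLen i := fun i hi => rowLen_eq_lam hmu hi
  have hce : ∀ j : ℕ, j ≠ l₀ → mu.colLen j = lam.colLen j := fun j hj => colLen_eq_lam hmu hj
  set A : ℂ := (l₀ : ℂ) - k₀ with hA
  set n₀ : ℕ := mu.colLen k₀ with hn₀
  have hn₀k : n₀ ≤ k₀ := by
    have := mu.colLen_anti l₀ k₀ (le_of_lt hkl)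
    omega
  have hrn₀ : mu.rowLen n₀ ≤ k₀ := by
    by_contra h
    push_neg at h
    have : (n₀, k₀) ∈ mu := YoungDiagram.mem_iff_lt_rowLen.2 h
    have := YoungDiagram.mem_iff_lt_colLen.1 this
    omega
  have hcy : ∀ y, mu.rowLen n₀ ≤ y → y ≤ k₀ → mu.colLen y = n₀ := by
    intro y h1 h2
    refine colLen_eq_of mu h1 ?_
    intro i hi
    have : (i, k₀) ∈ mu := YoungDiagram.mem_iff_lt_colLen.2 hi
    have := YoungDiagram.mem_iff_lt_rowLen.1 this
    omega
  set Srow : Finset (ℕ × ℕ) := (range n₀).image (fun x => (x, k₀)) with hSrow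
  set Scol : Finset (ℕ × ℕ) := ((range k₀).erase l₀).image
    (fun x => (max x l₀, min x l₀)) with hScol
  have hrowinj : ∀ x ∈ range n₀, ∀ y ∈ range n₀, (x, k₀) = ((y : ℕ), k₀) → x = y := by
    intro x _ y _ h
    simpa using h
  have hcolinj : ∀ x ∈ (range k₀).erase l₀, ∀ y ∈ (range k₀).erase l₀,
      (max x l₀, min x l₀) = (max y l₀, min y l₀) → x = y := by
    intro x hx y hy h
    simp only [Finset.mem_erase, Finset.mem_range] at hx hy
    simp only [Prod.mk.injEq] at h
    omega
  have hdisj : Disjoint Srow Scol := by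
    rw [Finset.disjoint_left]
    intro b hb hb'
    simp only [hSrow, hScol, Finset.mem_image, Finset.mem_range, Finset.mem_erase] at hb hb'
    obtain ⟨x, hx, rfl⟩ := hb
    obtain ⟨y, hy, h⟩ := hb'
    simp only [Prod.mk.injEq] at h
    omega
  -- values
  have hGrow : ∀ x, x < n₀ → z - A + (dval mu (x, k₀) : ℂ) = Us mu z x - 1 := by
    intro x hx
    rw [dval, if_pos (show (x, k₀).1 ≤ (x, k₀).2 by simp only; omega), hrmk, Us]
    push_cast; ring
  have hFrow : ∀ x, x < n₀ → z - A + (dval lam (x, k₀) : ℂ) = Us mu z x := by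
    intro x hx
    rw [dval, if_pos (show (x, k₀).1 ≤ (x, k₀).2 by simp only; omega), hrlk,
      ← hre x (by omega), Us]
    push_cast; ring
  have hGcol : ∀ x, x < k₀ → x ≠ l₀ →
      z - A + (dval mu (max x l₀, min x l₀) : ℂ) = Vs mu z x + 1 := by
    intro x hx hxl
    rw [dval, if_neg (show ¬ (max x l₀, min x l₀).1 ≤ (max x l₀, min x l₀).2 by
      simp only; omega)]
    rcases le_total x l₀ with h | h
    · rw [max_eq_right h, min_eq_left h, hcml, Vs]
      push_cast; ring
    · rw [max_eq_left h, min_eq_right h, hcml, Vs]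
      push_cast; ring
  have hFcol : ∀ x, x < k₀ → x ≠ l₀ →
      z - A + (dval lam (max x l₀, min x l₀) : ℂ) = Vs mu z x := by
    intro x hx hxl
    rw [dval, if_neg (show ¬ (max x l₀, min x l₀).1 ≤ (max x l₀, min x l₀).2 by
      simp only; omega)]
    rcases le_total x l₀ with h | h
    · rw [max_eq_right h, min_eq_left h, hcll, ← hce x hxl, Vs]
      push_cast; ring
    · rw [max_eq_left h, min_eq_right h, hcll, ← hce x hxl, Vs]
      push_cast; ring
  have hstar : z - A + (dval lam (k₀, l₀) : ℂ) = Vs mu z k₀ := by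
    rw [dval, if_neg (show ¬ (k₀, l₀).1 ≤ (k₀, l₀).2 by simp only; omega), hcll,
      ← hce k₀ (by omega), Vs, ← hn₀]
    push_cast; ring
  -- products
  have hprodGrow : ∏ b ∈ Srow, (z - A + (dval mu b : ℂ)) =
      ∏ x ∈ range n₀, (Us mu z x - 1) := by
    rw [hSrow, Finset.prod_image hrowinj]
    exact prod_congr rfl fun x hx => hGrow x (mem_range.1 hx)
  have hprodFrow : ∏ b ∈ Srow, (z - A + (dval lam b : ℂ)) =
      ∏ x ∈ range n₀, Us mu z x := by
    rw [hSrow, Finset.prod_image hrowinj]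
    exact prod_congr rfl fun x hx => hFrow x (mem_range.1 hx)
  have hprodGcol : ∏ b ∈ Scol, (z - A + (dval mu b : ℂ)) =
      ∏ x ∈ (range k₀).erase l₀, (Vs mu z x + 1) := by
    rw [hScol, Finset.prod_image hcolinj]
    refine prod_congr rfl fun x hx => ?_
    simp only [Finset.mem_erase, Finset.mem_range] at hx
    exact hGcol x hx.2 hx.1
  have hprodFcol : ∏ b ∈ Scol, (z - A + (dval lam b : ℂ)) =
      ∏ x ∈ (range k₀).erase l₀, Vs mu z x := by
    rw [hScol, Finset.prod_image hcolinj]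
    refine prod_congr rfl fun x hx => ?_
    simp only [Finset.mem_erase, Finset.mem_range] at hx
    exact hFcol x hx.2 hx.1
  have hVl : Vs mu z l₀ = z + A := by
    rw [Vs, hcml, hA]; ring
  have hl₀mem : l₀ ∈ range k₀ := mem_range.2 hkl
  have hVsplit : ∏ x ∈ range k₀, (Vs mu z x + 1) =
      (z + A + 1) * ∏ x ∈ (range k₀).erase l₀, (Vs mu z x + 1) := by
    rw [← Finset.mul_prod_erase (range k₀) _ hl₀mem, hVl]
  have hVsplit' : ∏ x ∈ range k₀, Vs mu z x =
      (z + A) * ∏ x ∈ (range k₀).erase l₀, Vs mu z x := by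
    rw [← Finset.mul_prod_erase (range k₀) _ hl₀mem, hVl]
  have hVico : ∏ x ∈ range k₀, (Vs mu z x + 1) =
      (∏ x ∈ range (mu.rowLen n₀), (Vs mu z x + 1)) *
        ∏ x ∈ Finset.Ico (mu.rowLen n₀) k₀, (Vs mu z x + 1) := by
    have h := prod_Ico_consecutive (fun x => Vs mu z x + 1) (Nat.zero_le (mu.rowLen n₀)) hrn₀
    simp only [← range_eq_Ico] at h
    exact h.symm
  have hVico' : ∏ x ∈ range k₀, Vs mu z x =
      (∏ x ∈ range (mu.rowLen n₀), Vs mu z x) *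
        ∏ x ∈ Finset.Ico (mu.rowLen n₀) k₀, Vs mu z x := by
    have h := prod_Ico_consecutive (fun x => Vs mu z x) (Nat.zero_le (mu.rowLen n₀)) hrn₀
    simp only [← range_eq_Ico] at h
    exact h.symm
  -- the shift identity on the Ico part
  set w : ℂ := z - (n₀ : ℂ) with hw
  have hVw : ∀ y ∈ Finset.Ico (mu.rowLen n₀) k₀, Vs mu z y = w + y := by
    intro y hy
    rw [mem_Ico] at hy
    rw [Vs, hcy y hy.1 (le_of_lt hy.2), hw]
    ring
  have hshift : Vs mu z k₀ * ∏ y ∈ Finset.Ico (mu.rowLen n₀) k₀, Vs mu z y =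
      Us mu z n₀ * ∏ y ∈ Finset.Ico (mu.rowLen n₀) k₀, (Vs mu z y + 1) := by
    have h1 := ico_shift w (mu.rowLen n₀) k₀ hrn₀
    have h2 : Vs mu z k₀ = w + (k₀ : ℂ) := by rw [Vs, ← hn₀, hw]; ring
    have h3 : Us mu z n₀ = w + (mu.rowLen n₀ : ℂ) := by rw [Us, hw]; ring
    rw [h2, h3]
    rw [show ∏ y ∈ Finset.Ico (mu.rowLen n₀) k₀, Vs mu z y =
      ∏ y ∈ Finset.Ico (mu.rowLen n₀) k₀, (w + y) from prod_congr rfl hVw]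
    rw [show ∏ y ∈ Finset.Ico (mu.rowLen n₀) k₀, (Vs mu z y + 1) =
      ∏ y ∈ Finset.Ico (mu.rowLen n₀) k₀, (w + y + 1) from
      prod_congr rfl fun y hy => by rw [hVw y hy]]
    exact h1
  refine ⟨Srow ∪ Scol, n₀, ∏ x ∈ Finset.Ico (mu.rowLen n₀) k₀, (Vs mu z x + 1),
    ?_, ?_, ?_, ?_⟩
  · intro b hb
    rcases Finset.mem_union.1 hb with hb | hb <;>
      simp only [hSrow, hScol, Finset.mem_image, Finset.mem_range, Finset.mem_erase] at hb
    · obtain ⟨x, hx, rfl⟩ := hb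
      exact (YoungDiagram.mem_cells _).2 (YoungDiagram.mem_iff_lt_colLen.2 hx)
    · obtain ⟨x, ⟨hxl, hx⟩, rfl⟩ := hb
      rcases le_total x l₀ with h | h
      · rw [max_eq_right h, min_eq_left h]
        refine (YoungDiagram.mem_cells _).2 (YoungDiagram.mem_iff_lt_rowLen.2 ?_)
        have h2 : (l₀, x) ∈ mu := by
          refine YoungDiagram.mem_iff_lt_colLen.2 ?_
          have := mu.colLen_anti x l₀ h
          omega
        exact YoungDiagram.mem_iff_lt_rowLen.1 h2
      · rw [max_eq_left h, min_eq_right h]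
        refine (YoungDiagram.mem_cells _).2 (YoungDiagram.mem_iff_lt_colLen.2 ?_)
        omega
  · -- coverage
    rintro ⟨i, j⟩ hb hnS
    have hbmu : (i, j) ∈ mu := (YoungDiagram.mem_cells _).1 hb
    rw [dval, dval]
    rcases le_or_gt i j with hij | hij
    · rw [if_pos hij, if_pos hij]
      have hik : i ≠ k₀ := by
        intro h
        have h2 := YoungDiagram.mem_iff_lt_rowLen.1 hbmu
        rw [h, hrmk] at h2
        omega
      have hjk : j ≠ k₀ := by
        intro h
        have h2 := YoungDiagram.mem_iff_lt_colLen.1 hbmu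
        rw [h, ← hn₀] at h2
        exact hnS (Finset.mem_union_left _ (Finset.mem_image.2 ⟨i, mem_range.2 h2, by rw [h]⟩))
      rw [hre i hik, hre j hjk]
    · rw [if_neg (by omega), if_neg (by omega)]
      have hjl' : j < mu.colLen j := YoungDiagram.mem_iff_lt_colLen.1
        (mu.up_left_mem (le_of_lt hij) le_rfl hbmu)
      have hil : i ≠ l₀ := by
        intro h
        have h2 := YoungDiagram.mem_iff_lt_rowLen.1 hbmu
        have h3 : j < k₀ := by
          have := mu.colLen_anti j l₀ (by omega)
          have h4 := YoungDiagram.mem_iff_lt_colLen.1 hbmu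
          rw [h] at h4
          omega
        refine hnS (Finset.mem_union_right _ (Finset.mem_image.2
          ⟨j, Finset.mem_erase.2 ⟨by omega, mem_range.2 h3⟩, ?_⟩))
        rw [max_eq_right (by omega : j ≤ l₀), min_eq_left (by omega : j ≤ l₀), h]
      have hjl : j ≠ l₀ := by
        intro h
        have h2 := YoungDiagram.mem_iff_lt_colLen.1 hbmu
        rw [h, hcml] at h2
        refine hnS (Finset.mem_union_right _ (Finset.mem_image.2
          ⟨i, Finset.mem_erase.2 ⟨by omega, mem_range.2 h2⟩, ?_⟩))
        rw [max_eq_left (by omega : l₀ ≤ i), min_eq_right (by omega : l₀ ≤ i), h]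
      rw [hce i hil, hce j hjl]
  · -- the G product
    rw [Finset.prod_union hdisj, hprodGrow, hprodGcol, Dn]
    calc (z + A + 1) * ((∏ x ∈ range n₀, (Us mu z x - 1)) *
          ∏ x ∈ (range k₀).erase l₀, (Vs mu z x + 1))
        = (∏ x ∈ range n₀, (Us mu z x - 1)) *
            ((z + A + 1) * ∏ x ∈ (range k₀).erase l₀, (Vs mu z x + 1)) := by ring
      _ = (∏ x ∈ range n₀, (Us mu z x - 1)) * ∏ x ∈ range k₀, (Vs mu z x + 1) := by
          rw [hVsplit]
      _ = _ := by rw [hVico]; ring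
  · -- the F product
    rw [Finset.prod_union hdisj, hprodFrow, hprodFcol, hstar, Nn]
    calc (z + A) * Vs mu z k₀ * ((∏ x ∈ range n₀, Us mu z x) *
          ∏ x ∈ (range k₀).erase l₀, Vs mu z x)
        = Vs mu z k₀ * (∏ x ∈ range n₀, Us mu z x) *
            ((z + A) * ∏ x ∈ (range k₀).erase l₀, Vs mu z x) := by ring
      _ = Vs mu z k₀ * (∏ x ∈ range n₀, Us mu z x) * ∏ x ∈ range k₀, Vs mu z x := by
          rw [hVsplit']
      _ = (∏ x ∈ range n₀, Us mu z x) * (∏ x ∈ range (mu.rowLen n₀), Vs mu z x) *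
            (Vs mu z k₀ * ∏ x ∈ Finset.Ico (mu.rowLen n₀) k₀, Vs mu z x) := by
          rw [hVico']; ring
      _ = _ := by rw [hshift]; ring

end HCI


open HCI

/-- The hook–content identity underlying the hook dimension formula for the
classical groups: `μ` is obtained from `λ` by removing the corner box `(k, l)`
(0-indexed `(k₀, l₀)`), `c★ = (t-1)/2 + l - k` and `c(i,j) = (t-1)/2 + j - i`. -/
theorem hook_content_identity (lam mu : YoungDiagram) (k₀ l₀ : ℕ)
    (hbox : (k₀, l₀) ∈ lam) (hmu : mu.cells = lam.cells.erase (k₀, l₀)) (t : ℂ)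
    (hc : (t - 1) / 2 + (l₀ : ℂ) - (k₀ : ℂ) ≠ 0)
    (hcc : ∀ b ∈ mu.cells,
      ((t - 1) / 2 + (l₀ : ℂ) - (k₀ : ℂ)) + ((t - 1) / 2 + (b.2 : ℂ) - (b.1 : ℂ)) ≠ 0)
    (hprod : ∏ b ∈ mu.cells, (t - 1 + (dval mu b : ℂ)) ≠ 0) :
    (((t - 1) / 2 + (l₀ : ℂ) - (k₀ : ℂ)) + (t - 1) / 2) *
        (2 * ((t - 1) / 2 + (l₀ : ℂ) - (k₀ : ℂ)) + 1) /
        (2 * ((t - 1) / 2 + (l₀ : ℂ) - (k₀ : ℂ))) *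
      ∏ b ∈ mu.cells,
        ((((t - 1) / 2 + (l₀ : ℂ) - (k₀ : ℂ)) + ((t - 1) / 2 + (b.2 : ℂ) - (b.1 : ℂ))) ^ 2 - 1) /
          (((t - 1) / 2 + (l₀ : ℂ) - (k₀ : ℂ)) + ((t - 1) / 2 + (b.2 : ℂ) - (b.1 : ℂ))) ^ 2 =
    (∏ b ∈ lam.cells, (t - 1 + (dval lam b : ℂ))) /
      (∏ b ∈ mu.cells, (t - 1 + (dval mu b : ℂ))) := by
  classical
  set z : ℂ := t - 1 + ((l₀ : ℂ) - (k₀ : ℂ)) with hz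
  set A : ℂ := (l₀ : ℂ) - (k₀ : ℂ) with hA
  set R : ℕ := mu.colLen 0 with hR
  -- basic nonvanishing facts
  have hzc : ∀ b ∈ mu.cells, z + (b.2 : ℂ) - (b.1 : ℂ) ≠ 0 := by
    intro b hb h
    apply hcc b hb
    rw [hz, hA] at h
    linear_combination h
  have h2c : 2 * ((t - 1) / 2 + (l₀ : ℂ) - (k₀ : ℂ)) ≠ 0 :=
    mul_ne_zero two_ne_zero hc
  have hzi : (∏ i ∈ range R, (z - (i : ℂ))) ≠ 0 := by
    rw [Finset.prod_ne_zero_iff]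
    intro i hi
    have hmem : ((i : ℕ), 0) ∈ mu.cells := (YoungDiagram.mem_cells _).2
      (YoungDiagram.mem_iff_lt_colLen.2 (by simpa [hR] using mem_range.1 hi))
    have := hzc _ hmem
    simpa using this
  have hDR : Dn mu z R ≠ 0 := by
    rw [Dn, rowLen_top, range_zero, prod_empty, mul_one, Finset.prod_ne_zero_iff]
    intro x hx
    have hxR : x < R := mem_range.1 hx
    have hrow : 0 < mu.rowLen x := by
      by_contra h
      push_neg at h
      have h1 : (x, 0) ∈ mu := YoungDiagram.mem_iff_lt_colLen.2 (by omega)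
      have := YoungDiagram.mem_iff_lt_rowLen.1 h1
      omega
    have hmem : (x, mu.rowLen x - 1) ∈ mu.cells := (YoungDiagram.mem_cells _).2
      (YoungDiagram.mem_iff_lt_rowLen.2 (by omega))
    have h2 := hzc _ hmem
    intro h
    apply h2
    rw [Us] at h
    simp only
    rw [show ((mu.rowLen x - 1 : ℕ) : ℂ) = (mu.rowLen x : ℂ) - 1 by
      push_cast [Nat.cast_sub hrow]; ring]
    linear_combination h
  have hGne : ∀ b ∈ mu.cells, (t - 1 + (dval mu b : ℂ)) ≠ 0 :=
    Finset.prod_ne_zero_iff.1 hprod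
  -- the case analysis package
  have hconcl : Concl lam mu k₀ l₀ z := by
    rcases le_or_gt k₀ l₀ with h | h
    · exact caseA lam mu k₀ l₀ hbox hmu h z
    · exact caseB lam mu k₀ l₀ hbox hmu h z
  obtain ⟨S, n₀, W, hSsub, hcover, hHa, hHb⟩ := hconcl
  have htz : z - ((l₀ : ℂ) - (k₀ : ℂ)) = t - 1 := by rw [hz, hA]; ring
  -- rewrite the Concl products into the (t-1)-shape
  have hfun : ∀ (ν : YoungDiagram) (T : Finset (ℕ × ℕ)),
      ∏ b ∈ T, (z - ((l₀ : ℂ) - (k₀ : ℂ)) + (dval ν b : ℂ)) =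
        ∏ b ∈ T, (t - 1 + (dval ν b : ℂ)) :=
    fun ν T => prod_congr rfl fun b _ => by rw [htz]
  rw [hfun] at hHa
  rw [hfun, htz] at hHb
  rw [← hA] at hHa hHb
  have hSG : (∏ b ∈ S, (t - 1 + (dval mu b : ℂ))) ≠ 0 :=
    Finset.prod_ne_zero_iff.2 fun b hb => hGne b (hSsub hb)
  -- split the mu-product along S
  have hsd := Finset.prod_sdiff (f := fun b => (t - 1 + (dval lam b : ℂ))) hSsub
  have hsd' := Finset.prod_sdiff (f := fun b => (t - 1 + (dval mu b : ℂ))) hSsub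
  have hFGoff : ∏ b ∈ mu.cells \ S, (t - 1 + (dval lam b : ℂ)) =
      ∏ b ∈ mu.cells \ S, (t - 1 + (dval mu b : ℂ)) := by
    refine prod_congr rfl fun b hb => ?_
    rw [Finset.mem_sdiff] at hb
    rw [hcover b hb.1 hb.2]
  have hF1 : (∏ b ∈ mu.cells, (t - 1 + (dval lam b : ℂ))) *
        ∏ b ∈ S, (t - 1 + (dval mu b : ℂ)) =
      (∏ b ∈ mu.cells, (t - 1 + (dval mu b : ℂ))) *
        ∏ b ∈ S, (t - 1 + (dval lam b : ℂ)) := by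
    rw [← hsd, ← hsd', hFGoff]
    ring
  -- the base identity, with the common factor cancelled
  have hbase : z * (∏ b ∈ mu.cells, ((z + b.2 - b.1) ^ 2 - 1)) * Dn mu z R =
      (∏ b ∈ mu.cells, (z + b.2 - b.1) ^ 2) * Nn mu z R :=
    mul_left_cancel₀ hzi (base_identity mu z)
  -- the swap identity
  have hswap : Nn mu z n₀ * Dn mu z R = Nn mu z R * Dn mu z n₀ := by
    rcases le_total n₀ R with h | h
    · exact NDswap mu z n₀ R h
    · exact (NDswap mu z R n₀ h).symm
  -- the master equality, multiplied by the carrier ∏_S G * Dn R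
  have hmaster : (z * (z + A + 1) * (∏ b ∈ mu.cells, ((z + b.2 - b.1) ^ 2 - 1)) *
        ∏ b ∈ mu.cells, (t - 1 + (dval mu b : ℂ))) *
        ((∏ b ∈ S, (t - 1 + (dval mu b : ℂ))) * Dn mu z R) =
      ((z + A) * (∏ b ∈ mu.cells, (z + b.2 - b.1) ^ 2) *
          (t - 1 + (dval lam (k₀, l₀) : ℂ)) *
          ∏ b ∈ mu.cells, (t - 1 + (dval lam b : ℂ))) *
        ((∏ b ∈ S, (t - 1 + (dval mu b : ℂ))) * Dn mu z R) := by
    calc (z * (z + A + 1) * (∏ b ∈ mu.cells, ((z + b.2 - b.1) ^ 2 - 1)) *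
          ∏ b ∈ mu.cells, (t - 1 + (dval mu b : ℂ))) *
          ((∏ b ∈ S, (t - 1 + (dval mu b : ℂ))) * Dn mu z R)
        = (z * (∏ b ∈ mu.cells, ((z + b.2 - b.1) ^ 2 - 1)) * Dn mu z R) *
            (∏ b ∈ mu.cells, (t - 1 + (dval mu b : ℂ))) *
            ((z + A + 1) * ∏ b ∈ S, (t - 1 + (dval mu b : ℂ))) := by ring
      _ = ((∏ b ∈ mu.cells, (z + b.2 - b.1) ^ 2) * Nn mu z R) *
            (∏ b ∈ mu.cells, (t - 1 + (dval mu b : ℂ))) *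
            (Dn mu z n₀ * W) := by rw [hbase, hHa]
      _ = (∏ b ∈ mu.cells, (z + b.2 - b.1) ^ 2) *
            (∏ b ∈ mu.cells, (t - 1 + (dval mu b : ℂ))) * W *
            (Nn mu z R * Dn mu z n₀) := by ring
      _ = (∏ b ∈ mu.cells, (z + b.2 - b.1) ^ 2) *
            (∏ b ∈ mu.cells, (t - 1 + (dval mu b : ℂ))) * W *
            (Nn mu z n₀ * Dn mu z R) := by rw [← hswap]
      _ = (∏ b ∈ mu.cells, (z + b.2 - b.1) ^ 2) *
            (∏ b ∈ mu.cells, (t - 1 + (dval mu b : ℂ))) * Dn mu z R *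
            ((z + A) * (t - 1 + (dval lam (k₀, l₀) : ℂ)) *
              ∏ b ∈ S, (t - 1 + (dval lam b : ℂ))) := by
          linear_combination (-((∏ b ∈ mu.cells, (z + (b.2:ℂ) - b.1) ^ 2) *
            (∏ b ∈ mu.cells, (t - 1 + (dval mu b : ℂ))) * Dn mu z R)) * hHb
      _ = (∏ b ∈ mu.cells, (z + b.2 - b.1) ^ 2) * Dn mu z R *
            ((z + A) * (t - 1 + (dval lam (k₀, l₀) : ℂ))) *
            ((∏ b ∈ mu.cells, (t - 1 + (dval mu b : ℂ))) *
              ∏ b ∈ S, (t - 1 + (dval lam b : ℂ))) := by ring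
      _ = (∏ b ∈ mu.cells, (z + b.2 - b.1) ^ 2) * Dn mu z R *
            ((z + A) * (t - 1 + (dval lam (k₀, l₀) : ℂ))) *
            ((∏ b ∈ mu.cells, (t - 1 + (dval lam b : ℂ))) *
              ∏ b ∈ S, (t - 1 + (dval mu b : ℂ))) := by rw [← hF1]
      _ = _ := by ring
  have hgoal' : z * (z + A + 1) * (∏ b ∈ mu.cells, ((z + b.2 - b.1) ^ 2 - 1)) *
        ∏ b ∈ mu.cells, (t - 1 + (dval mu b : ℂ)) =
      (z + A) * (∏ b ∈ mu.cells, (z + b.2 - b.1) ^ 2) *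
        (t - 1 + (dval lam (k₀, l₀) : ℂ)) *
        ∏ b ∈ mu.cells, (t - 1 + (dval lam b : ℂ)) :=
    mul_right_cancel₀ (mul_ne_zero hSG hDR) hmaster
  -- now deduce the statement
  have hlamcells : lam.cells = insert (k₀, l₀) mu.cells := by
    rw [hmu, Finset.insert_erase ((YoungDiagram.mem_cells _).2 hbox)]
  have hnotmem : (k₀, l₀) ∉ mu.cells := by
    rw [hmu]
    exact Finset.notMem_erase _ _
  have hPlam : ∏ b ∈ lam.cells, (t - 1 + (dval lam b : ℂ)) =
      (t - 1 + (dval lam (k₀, l₀) : ℂ)) * ∏ b ∈ mu.cells, (t - 1 + (dval lam b : ℂ)) := by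
    rw [hlamcells, Finset.prod_insert hnotmem]
  have hden : (∏ b ∈ mu.cells,
      (((t - 1) / 2 + (l₀ : ℂ) - (k₀ : ℂ)) + ((t - 1) / 2 + (b.2 : ℂ) - (b.1 : ℂ))) ^ 2) ≠ 0 :=
    Finset.prod_ne_zero_iff.2 fun b hb => pow_ne_zero _ (hcc b hb)
  have hnum : ∏ b ∈ mu.cells,
      ((((t - 1) / 2 + (l₀ : ℂ) - (k₀ : ℂ)) + ((t - 1) / 2 + (b.2 : ℂ) - (b.1 : ℂ))) ^ 2 - 1) =
      ∏ b ∈ mu.cells, ((z + b.2 - b.1) ^ 2 - 1) := by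
    refine prod_congr rfl fun b _ => ?_
    rw [hz, hA]; ring
  have hden2 : ∏ b ∈ mu.cells,
      (((t - 1) / 2 + (l₀ : ℂ) - (k₀ : ℂ)) + ((t - 1) / 2 + (b.2 : ℂ) - (b.1 : ℂ))) ^ 2 =
      ∏ b ∈ mu.cells, (z + b.2 - b.1) ^ 2 := by
    refine prod_congr rfl fun b _ => ?_
    rw [hz, hA]; ring
  rw [eq_div_iff hprod, Finset.prod_div_distrib, hPlam]
  rw [div_mul_div_comm, div_mul_eq_mul_div, div_eq_iff (mul_ne_zero h2c hden)]
  rw [hnum, hden2]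
  have hzz : ((t - 1) / 2 + (l₀ : ℂ) - (k₀ : ℂ)) + (t - 1) / 2 = z := by rw [hz, hA]; ring
  have hzz2 : 2 * ((t - 1) / 2 + (l₀ : ℂ) - (k₀ : ℂ)) = z + A := by rw [hz, hA]; ring
  rw [hzz, hzz2]
  linear_combination hgoal'

end
end

section
/- For all integers l ≥ 0 and N ≥ 3l, Σ_{k=l}^{2l} (−1)^k · (N − k)! / ( (k − l)! · (2l − k)! · (N − k − l)! ) = (−1)^l. -/
open Finset

lemma key_choose_sum : ∀ (l n : ℕ), l ≤ n →
    ∑ j ∈ Finset.range (l + 1),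
      (-1 : ℚ) ^ j * (l.choose j) * ((n - j).choose l) = 1 := by
  intro l
  induction l with
  | zero => intro n _; simp
  | succ l IH =>
    intro n hn
    have hB : ∑ j ∈ Finset.range (l + 2),
        (-1 : ℚ) ^ j * (l.choose j) * ((n - j).choose (l + 1))
        = ∑ j ∈ Finset.range (l + 1),
        (-1 : ℚ) ^ j * (l.choose j) * ((n - j).choose (l + 1)) := by
      rw [Finset.sum_range_succ, Nat.choose_succ_self]
      simp
    have hAB : ∑ j ∈ Finset.range (l + 2),
        (-1 : ℚ) ^ j * ((l+1).choose j) * ((n - j).choose (l + 1))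
        = (∑ j ∈ Finset.range (l + 2),
            (-1 : ℚ) ^ j * (l.choose j) * ((n - j).choose (l + 1)))
          + ∑ i ∈ Finset.range (l + 1),
            (-1 : ℚ) ^ (i+1) * (l.choose i) * ((n - (i+1)).choose (l + 1)) := by
      rw [Finset.sum_range_succ' (fun j => (-1 : ℚ) ^ j * ((l+1).choose j) * ((n - j).choose (l + 1))),
          Finset.sum_range_succ' (fun j => (-1 : ℚ) ^ j * (l.choose j) * ((n - j).choose (l + 1)))]
      have hsplit : ∀ x ∈ Finset.range (l + 1),
          (-1 : ℚ) ^ (x+1) * ((l+1).choose (x+1)) * ((n - (x+1)).choose (l + 1))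
          = (-1 : ℚ) ^ (x+1) * (l.choose (x+1)) * ((n - (x+1)).choose (l + 1))
            + (-1 : ℚ) ^ (x+1) * (l.choose x) * ((n - (x+1)).choose (l + 1)) := by
        intro x _
        rw [Nat.choose_succ_succ]
        push_cast
        ring
      rw [Finset.sum_congr rfl hsplit, Finset.sum_add_distrib]
      simp only [Nat.choose_zero_right]
      ring
    rw [hAB, hB, ← Finset.sum_add_distrib]
    have hcongr : ∀ j ∈ Finset.range (l + 1),
        (-1 : ℚ) ^ j * (l.choose j) * ((n - j).choose (l + 1))
          + (-1 : ℚ) ^ (j+1) * (l.choose j) * ((n - (j+1)).choose (l + 1))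
        = (-1 : ℚ) ^ j * (l.choose j) * (((n-1) - j).choose l) := by
      intro j hj
      rw [Finset.mem_range] at hj
      have h1 : n - j = (n - (j+1)) + 1 := by omega
      have h2 : (n - 1) - j = n - (j + 1) := by omega
      rw [h1, h2, Nat.choose_succ_succ]
      push_cast
      ring
    rw [Finset.sum_congr rfl hcongr]
    exact IH (n - 1) (by omega)

/-- `Σ_{k=l}^{2l} (-1)^k (N-k)! / ((k-l)! (2l-k)! (N-k-l)!) = (-1)^l` for `N ≥ 3l`. -/
theorem alternating_sum_factorial_identity (l N : ℕ) (h : 3 * l ≤ N) :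
    ∑ k ∈ Finset.Icc l (2 * l),
      (-1 : ℚ) ^ k * (N - k).factorial /
        ((k - l).factorial * (2 * l - k).factorial * (N - k - l).factorial) =
      (-1 : ℚ) ^ l := by
  rw [← Finset.Ico_add_one_right_eq_Icc, Finset.sum_Ico_eq_sum_range]
  have hrange : 2 * l + 1 - l = l + 1 := by omega
  rw [hrange]
  have hterm : ∀ j ∈ Finset.range (l + 1),
      (-1 : ℚ) ^ (l + j) * (N - (l + j)).factorial /
        (((l + j) - l).factorial * (2 * l - (l + j)).factorial *
          (N - (l + j) - l).factorial)
      = (-1 : ℚ) ^ l * ((-1 : ℚ) ^ j * (l.choose j) * (((N - l) - j).choose l)) := by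
    intro j hj
    rw [Finset.mem_range] at hj
    have hj' : j ≤ l := by omega
    have e1 : (l + j) - l = j := by omega
    have e2 : 2 * l - (l + j) = l - j := by omega
    have e3 : N - (l + j) = N - l - j := by omega
    have e4 : N - (l + j) - l = N - 2 * l - j := by omega
    rw [e1, e2, e4, e3]
    have hc1 : (l.choose j) * j.factorial * (l - j).factorial = l.factorial :=
      Nat.choose_mul_factorial_mul_factorial hj'
    have hle : l ≤ N - l - j := by omega
    have e5 : N - l - j - l = N - 2 * l - j := by omega
    have hc2 : ((N - l - j).choose l) * l.factorial * (N - 2 * l - j).factorial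
        = (N - l - j).factorial := by
      have := Nat.choose_mul_factorial_mul_factorial hle
      rwa [e5] at this
    have h1 : (j.factorial : ℚ) ≠ 0 := by positivity
    have h2 : ((l - j).factorial : ℚ) ≠ 0 := by positivity
    have h3 : ((N - 2 * l - j).factorial : ℚ) ≠ 0 := by positivity
    have h4 : ((l.factorial : ℚ)) ≠ 0 := by positivity
    rw [pow_add]
    field_simp
    have hc1' : ((l.choose j : ℚ)) * j.factorial * (l - j).factorial = l.factorial := by
      exact_mod_cast congrArg (Nat.cast : ℕ → ℚ) hc1
    have hc2' : (((N - l - j).choose l : ℚ)) * l.factorial * (N - 2 * l - j).factorial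
        = (N - l - j).factorial := by
      exact_mod_cast congrArg (Nat.cast : ℕ → ℚ) hc2
    linear_combination (-1) * hc2'
      - (((N - l - j).choose l : ℚ)) *
        ((N - 2 * l - j).factorial : ℚ) * hc1'
  rw [Finset.sum_congr rfl hterm, ← Finset.mul_sum,
    key_choose_sum l (N - l) (by omega), mul_one]
end

section
/- (Evaluation of the row double Schur polynomial.) Let (a_i)_{i ∈ ℤ} be any sequence of complex numbers, and let n ≥ 1, l ≥ 0, k ≥ 0 be integers. Define y ∈ ℂ^n by y_i := a_i for 1 ≤ i ≤ n−1 and y_n := a_{n+k}. Then Σ_{1 ≤ i_1 ≤ ⋯ ≤ i_l ≤ n} ∏_{t=1}^{l} ( y_{i_t} − a_{i_t + t − 1} ) = ∏_{t=1}^{l} ( a_{n+k} − a_{n+t−1} ); that is, in the sum only the term with i_1 = ⋯ = i_l = n survives. (Since the double Schur polynomial s_{(l)}(x|a) := Σ_{1 ≤ i_1 ≤ ⋯ ≤ i_l ≤ n} ∏_{t=1}^{l} (x_{i_t} − a_{i_t+t−1}) is symmetric in x, this computes s_{(l)}(a_{(k)}|a) for a_{(k)} = (a_{k+n}, a_{n−1},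 …, a_1).) -/
open Finset

noncomputable section

/-- The point `a_{(k)} = (a_{k+n}, a_{n-1}, …, a_1)` reordered increasingly:
`y_i = a_i` for `1 ≤ i ≤ n-1` and `y_n = a_{n+k}` (0-indexed `i₀ = i - 1`). -/
def yRow (a : ℤ → ℂ) (n k : ℕ) : Fin n → ℂ :=
  fun i => if (i : ℕ) = n - 1 then a ((n : ℤ) + k) else a ((i : ℕ) + 1)

open scoped Classical in
/-- Evaluation of the row double Schur polynomial: in
`s_{(l)}(x|a) = Σ_{1 ≤ i_1 ≤ … ≤ i_l ≤ n} ∏_{t=1}^{l} (x_{i_t} - a_{i_t+t-1})`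
evaluated at `x = y`, only the term with `i_1 = … = i_l = n` survives, giving
`∏_{t=1}^{l} (a_{n+k} - a_{n+t-1})`. -/
theorem row_double_schur_evaluation (a : ℤ → ℂ) (n : ℕ) (hn : 1 ≤ n) (l k : ℕ) :
    ∑ f ∈ Finset.univ.filter (fun f : Fin l → Fin n => Monotone f),
        ∏ t : Fin l, (yRow a n k (f t) - a (((f t : ℕ) : ℤ) + ((t : ℕ) : ℤ) + 1)) =
      ∏ t : Fin l, (a ((n : ℤ) + k) - a ((n : ℤ) + (t : ℕ))) := by
  rcases Nat.eq_zero_or_pos l with hl | hl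
  · subst hl
    have hfilter : Finset.univ.filter (fun f : Fin 0 → Fin n => Monotone f) = Finset.univ :=
      Finset.filter_true_of_mem (fun f _ => fun i j _ => i.elim0)
    rw [hfilter]
    simp
  · set m : Fin n := ⟨n - 1, by omega⟩ with hm
    have hmtop : ∀ j : Fin n, j ≤ m := by
      intro j
      exact Fin.mk_le_mk.mpr (by omega)
    set z : Fin l := ⟨0, hl⟩ with hz
    rw [Finset.sum_eq_single_of_mem (fun _ => m)]
    · apply Finset.prod_congr rfl
      intro t _
      have hy : yRow a n k m = a ((n : ℤ) + k) := by
        simp [yRow, hm]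
      rw [hy]
      congr 1
      have : ((m : ℕ) : ℤ) = (n : ℤ) - 1 := by
        simp [hm]
        omega
      rw [this]
      ring
    · simp [Finset.mem_filter, monotone_const]
    · intro f hf hne
      rw [Finset.mem_filter] at hf
      have hmono : Monotone f := hf.2
      -- f z ≠ m
      have hfz : f z ≠ m := by
        intro h
        apply hne
        funext t
        have h1 : f z ≤ f t := hmono (by exact Fin.mk_le_mk.mpr (Nat.zero_le _))
        have h2 : f t ≤ m := hmtop _
        rw [h] at h1
        exact le_antisymm h2 h1
      apply Finset.prod_eq_zero (Finset.mem_univ z)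
      have hne' : ((f z : ℕ)) ≠ n - 1 := by
        intro h
        exact hfz (Fin.ext h)
      have hy : yRow a n k (f z) = a (((f z : ℕ) : ℤ) + 1) := by
        simp [yRow, hne']
      rw [hy]
      have : (((z : Fin l) : ℕ) : ℤ) = 0 := by simp [hz]
      rw [this]
      simp

end
end

section
/- (Evaluation of the column double Schur polynomial.) Let (a_i)_{i ∈ ℤ} be any sequence of complex numbers, and let n ≥ 1 and 1 ≤ l ≤ k ≤ n be integers. Define x ∈ ℂ^n by x_j := a_{n−j+2} for 1 ≤ j ≤ k and x_j := a_{n−j+1} for k < j ≤ n. Then Σ_{1 ≤ i_1 < ⋯ < i_l ≤ n} ∏_{t=1}^{l} ( x_{i_t} − a_{i_t − t + 1} ) = ∏_{t=1}^{l} ( a_{n−l+1+t} − a_{n−k+1} ); i.e. the column double Schur polynomial satisfies s_{(1^l)}(a_{(1^k)}|a) = (a_{n−l+2} − a_{n−k+1})(a_{n−l+3} − a_{n−k+1}) ⋯ (a_{n+1} − a_{n−k+1}). -/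
open Finset

noncomputable section

/-- The point `a_{(1^k)} = (a_{n+1}, a_n, …, a_{n-k+2}, a_{n-k}, …, a_1)`:
in 1-indexed terms `x_j = a_{n-j+2}` for `1 ≤ j ≤ k` and `x_j = a_{n-j+1}` for
`k < j ≤ n` (0-indexed `j₀ = j - 1`). -/
def xCol (a : ℤ → ℂ) (n k : ℕ) : Fin n → ℂ :=
  fun j => if (j : ℕ) + 1 ≤ k then a ((n : ℤ) - (j : ℕ) + 1) else a ((n : ℤ) - (j : ℕ))

namespace ColSchur

/-- The "factorial elementary symmetric function" on a list, defined by the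
head recursion `e_D(x::xs, l+1) = (x - a D) e_D(xs, l) + e_{D+1}(xs, l+1)`. -/
noncomputable def eF (a : ℤ → ℂ) : ℤ → List ℂ → ℕ → ℂ
  | _, _, 0 => 1
  | _, [], _ + 1 => 0
  | D, x :: xs, l + 1 => (x - a D) * eF a D xs l + eF a (D + 1) xs (l + 1)

@[simp] lemma eF_zero (a : ℤ → ℂ) (D : ℤ) (xs : List ℂ) : eF a D xs 0 = 1 := by
  cases xs <;> rfl

@[simp] lemma eF_nil (a : ℤ → ℂ) (D : ℤ) (l : ℕ) : eF a D [] (l + 1) = 0 := rfl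

lemma eF_cons (a : ℤ → ℂ) (D : ℤ) (x : ℂ) (xs : List ℂ) (l : ℕ) :
    eF a D (x :: xs) (l + 1) = (x - a D) * eF a D xs l + eF a (D + 1) xs (l + 1) := rfl

lemma eF_swap (a : ℤ → ℂ) (x y : ℂ) (xs : List ℂ) :
    ∀ (D : ℤ) (l : ℕ), eF a D (x :: y :: xs) l = eF a D (y :: x :: xs) l := by
  intro D l
  match l with
  | 0 => rfl
  | 1 => simp only [eF_cons, eF_zero]; ring
  | (l + 2) => simp only [eF_cons, eF_zero]; ring

/-- `eF` is invariant under permutations of the list. -/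
lemma eF_perm (a : ℤ → ℂ) {xs ys : List ℂ} (h : xs.Perm ys) :
    ∀ (D : ℤ) (l : ℕ), eF a D xs l = eF a D ys l := by
  induction h with
  | nil => intro D l; rfl
  | cons z h ih =>
    intro D l
    cases l with
    | zero => rfl
    | succ l => rw [eF_cons, eF_cons, ih, ih]
  | swap p q r => intro D l; exact eF_swap a q p r D l
  | trans h₁ h₂ ih₁ ih₂ => intro D l; rw [ih₁, ih₂]

/-- `eF` vanishes on an initial arithmetic segment of `a`. -/
lemma eF_arith (a : ℤ → ℂ) (l : ℕ) :
    ∀ (m : ℕ) (D : ℤ), eF a D ((List.range m).map (fun i : ℕ => a (D + (i : ℕ)))) (l + 1) = 0 := by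
  intro m
  induction m with
  | zero => intro D; rfl
  | succ m ih =>
    intro D
    rw [List.range_succ_eq_map, List.map_cons, List.map_map]
    have h2 : (List.range m).map ((fun i : ℕ => a (D + (i : ℕ))) ∘ Nat.succ)
        = (List.range m).map (fun i : ℕ => a ((D + 1) + (i : ℕ))) := by
      apply List.map_congr_left
      intro i _
      simp only [Function.comp]
      congr 1
      push_cast
      ring
    rw [h2, eF_cons, ih (D + 1)]
    simp

/-- Splitting off the last element of the list. -/
lemma eF_snoc (a : ℤ → ℂ) : ∀ (xs : List ℂ) (z : ℂ) (D : ℤ) (l : ℕ),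
    eF a D (xs ++ [z]) (l + 1)
      = eF a D xs (l + 1) + (z - a ((xs.length : ℤ) - (l : ℕ) + D)) * eF a D xs l := by
  intro xs
  induction xs with
  | nil =>
    intro z D l
    cases l with
    | zero => simp [eF_cons]
    | succ l => simp [eF_cons]
  | cons w xs ih =>
    intro z D l
    cases l with
    | zero =>
      rw [List.cons_append, eF_cons, eF_zero, ih z (D + 1) 0, eF_cons]
      simp only [eF_zero, List.length_cons]
      have harg : ((xs.length : ℤ) - ((0:ℕ) : ℤ) + (D + 1)) = (((xs.length + 1 : ℕ) : ℤ) - ((0:ℕ) : ℤ) + D) := by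
        push_cast; ring
      rw [harg]
      ring
    | succ l =>
      rw [List.cons_append, eF_cons, ih z D l, ih z (D + 1) (l + 1), eF_cons, eF_cons]
      have h1 : ((xs.length : ℤ) - ((l+1 : ℕ) : ℤ) + (D + 1)) = ((xs.length : ℤ) - ((l:ℕ) : ℤ) + D) := by
        push_cast; ring
      have h2 : (((w :: xs).length : ℤ) - ((l+1 : ℕ) : ℤ) + D) = ((xs.length : ℤ) - ((l:ℕ) : ℤ) + D) := by
        simp only [List.length_cons]; push_cast; ring
      rw [h1, h2]
      ring

/-- The telescoping product identity. -/
lemma key (b : ℤ → ℂ) (A : ℂ) (v : ℤ) (l : ℕ) :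
    (∏ t ∈ Finset.range (l + 1 + 1), (b (v + (t : ℕ)) - A))
      + (b (v + (l : ℕ) + 2) - b v) * (∏ t ∈ Finset.range (l + 1), (b (v + 1 + (t : ℕ)) - A))
    = ∏ t ∈ Finset.range (l + 1 + 1), (b (v + 1 + (t : ℕ)) - A) := by
  rw [Finset.prod_range_succ' (fun t : ℕ => b (v + (t : ℕ)) - A) (l + 1)]
  rw [Finset.prod_range_succ (fun t : ℕ => b (v + 1 + (t : ℕ)) - A) (l + 1)]
  have h1 : ∏ t ∈ Finset.range (l + 1), (b (v + ((t + 1 : ℕ) : ℤ)) - A)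
      = ∏ t ∈ Finset.range (l + 1), (b (v + 1 + (t : ℕ)) - A) := by
    refine Finset.prod_congr rfl fun t _ => ?_
    congr 2
    push_cast; ring
  have h2 : b (v + ((0:ℕ) : ℤ)) = b v := by norm_num
  have h3 : b (v + 1 + ((l + 1 : ℕ) : ℤ)) = b (v + (l : ℕ) + 2) := by
    congr 1; push_cast; ring
  rw [h1, h2, h3]
  ring

/-- Closed form of `eF` on the increasing list `a 1, …, a c, a (c+2), …, a (c+j+1)`. -/
lemma eF_closed (a : ℤ → ℂ) (c : ℕ) : ∀ (j l : ℕ),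
    eF a 1 ((List.range (c + j)).map (fun i : ℕ => if i < c then a ((i : ℕ) + 1) else a ((i : ℕ) + 2))) (l + 1)
      = ∏ t ∈ Finset.range (l + 1), (a ((c : ℕ) + (j : ℕ) + 1 - (l : ℕ) + (t : ℕ)) - a ((c : ℕ) + 1)) := by
  intro j
  induction j with
  | zero =>
    intro l
    have hlist : (List.range (c + 0)).map (fun i : ℕ => if i < c then a ((i : ℕ) + 1) else a ((i : ℕ) + 2))
        = (List.range c).map (fun i : ℕ => a ((1 : ℤ) + (i : ℕ))) := by
      rw [Nat.add_zero]
      apply List.map_congr_left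
      intro i hi
      rw [if_pos (List.mem_range.mp hi)]
      congr 1; ring
    rw [hlist, eF_arith]
    symm
    apply Finset.prod_eq_zero (Finset.self_mem_range_succ l)
    have harg : ((c : ℕ) : ℤ) + ((0 : ℕ) : ℤ) + 1 - (l : ℕ) + ((l : ℕ) : ℤ) = ((c : ℕ) : ℤ) + 1 := by
      push_cast; ring
    rw [harg, sub_self]
  | succ j ih =>
    intro l
    have hsplit : List.range (c + (j + 1)) = List.range (c + j) ++ [c + j] := by
      rw [show c + (j + 1) = (c + j) + 1 from rfl, List.range_succ]
    rw [hsplit, List.map_append, List.map_singleton, if_neg (by omega), eF_snoc,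
      List.length_map, List.length_range]
    cases l with
    | zero =>
      rw [ih 0, eF_zero]
      have h1 : (((c + j : ℕ) : ℤ) - ((0 : ℕ) : ℤ) + 1) = ((c:ℤ) + (j:ℤ) + 1 - ((0:ℕ):ℤ) + ((0:ℕ):ℤ)) := by
        push_cast; ring
      rw [Finset.prod_range_one, Finset.prod_range_one, h1]
      have h2 : (((c + j : ℕ) : ℤ) + 2) = ((c:ℤ) + ((j+1 : ℕ):ℤ) + 1 - ((0:ℕ):ℤ) + ((0:ℕ):ℤ)) := by
        push_cast; ring
      rw [h2]
      ring
    | succ l =>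
      rw [ih (l + 1), ih l]
      set A := a ((c : ℕ) + 1) with hA
      set v : ℤ := (c : ℤ) + (j : ℤ) - (l : ℤ) with hv
      have h1 : ∏ t ∈ Finset.range (l + 1 + 1), (a ((c:ℤ) + (j:ℤ) + 1 - ((l+1 : ℕ):ℤ) + (t:ℕ)) - A)
          = ∏ t ∈ Finset.range (l + 1 + 1), (a (v + (t : ℕ)) - A) := by
        refine Finset.prod_congr rfl fun t _ => ?_
        congr 2; push_cast; ring
      have h2 : ∏ t ∈ Finset.range (l + 1), (a ((c:ℤ) + (j:ℤ) + 1 - ((l : ℕ):ℤ) + (t:ℕ)) - A)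
          = ∏ t ∈ Finset.range (l + 1), (a (v + 1 + (t : ℕ)) - A) := by
        refine Finset.prod_congr rfl fun t _ => ?_
        congr 2; push_cast; ring
      have h3 : ∏ t ∈ Finset.range (l + 1 + 1), (a ((c:ℤ) + ((j+1 : ℕ):ℤ) + 1 - ((l+1 : ℕ):ℤ) + (t:ℕ)) - A)
          = ∏ t ∈ Finset.range (l + 1 + 1), (a (v + 1 + (t : ℕ)) - A) := by
        refine Finset.prod_congr rfl fun t _ => ?_
        congr 2; push_cast; ring
      have h4 : (((c + j : ℕ) : ℤ) + 2) = v + (l : ℕ) + 2 := by rw [hv]; push_cast; ring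
      have h5 : (((c + j : ℕ) : ℤ) - ((l + 1 : ℕ) : ℤ) + 1) = v := by rw [hv]; push_cast; ring
      rw [h1, h2, h3, h4, h5]
      exact key a A v l

open scoped Classical in
/-- The sum over strictly monotone maps equals `eF` of the list of values. -/
lemma conn (a : ℤ → ℂ) : ∀ (m l : ℕ) (D : ℤ) (x : Fin m → ℂ),
    (∑ f ∈ Finset.univ.filter (fun f : Fin l → Fin m => StrictMono f),
      ∏ t : Fin l, (x (f t) - a (((f t : ℕ) : ℤ) - ((t : ℕ) : ℤ) + D)))
    = eF a D (List.ofFn x) l := by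
  intro m
  induction m with
  | zero =>
    intro l D x
    cases l with
    | zero =>
      have hfil : Finset.univ.filter (fun f : Fin 0 → Fin 0 => StrictMono f) = Finset.univ :=
        Finset.filter_true_of_mem (fun f _ => by intro p q h; exact p.elim0)
      rw [hfil]
      simp [List.ofFn_zero, eF_zero]
    | succ l =>
      haveI : IsEmpty (Fin (l + 1) → Fin 0) := ⟨fun f => (f 0).elim0⟩
      rw [Finset.univ_eq_empty, Finset.filter_empty, Finset.sum_empty, List.ofFn_zero, eF_nil]
  | succ m ih =>
    intro l D x
    cases l with
    | zero =>
      have hfil : Finset.univ.filter (fun f : Fin 0 → Fin (m+1) => StrictMono f) = Finset.univ :=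
        Finset.filter_true_of_mem (fun f _ => by intro p q h; exact p.elim0)
      rw [hfil]
      simp [eF_zero]
    | succ l =>
      rw [← Finset.sum_filter_add_sum_filter_not
        (Finset.univ.filter (fun f : Fin (l+1) → Fin (m+1) => StrictMono f)) (fun f => f 0 = 0),
        Finset.filter_filter, Finset.filter_filter]
      have hA : ∑ f ∈ Finset.univ.filter (fun f : Fin (l+1) → Fin (m+1) => StrictMono f ∧ f 0 = 0),
          ∏ t : Fin (l+1), (x (f t) - a (((f t : ℕ) : ℤ) - ((t : ℕ) : ℤ) + D))
          = (x 0 - a D) * eF a D (List.ofFn (fun i => x i.succ)) l := by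
        rw [← ih l D (fun i => x i.succ), Finset.mul_sum]
        refine Finset.sum_bij (fun f hf => fun t : Fin l =>
            (f t.succ).pred (by
              have h := (Finset.mem_filter.mp hf).2
              have h2 : f 0 < f t.succ := h.1 (Fin.succ_pos t)
              rw [h.2] at h2
              exact h2.ne')) ?_ ?_ ?_ ?_
        · intro f hf
          refine Finset.mem_filter.mpr ⟨Finset.mem_univ _, ?_⟩
          intro p q hpq
          have h := (Finset.mem_filter.mp hf).2
          exact Fin.pred_lt_pred_iff.mpr (h.1 (Fin.succ_lt_succ_iff.mpr hpq))
        · intro f₁ h₁ f₂ h₂ heq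
          funext t
          induction t using Fin.cases with
          | zero => rw [(Finset.mem_filter.mp h₁).2.2, (Finset.mem_filter.mp h₂).2.2]
          | succ u =>
            have := congrFun heq u
            have h3 : ((f₁ u.succ).pred _).succ = ((f₂ u.succ).pred _).succ := congrArg Fin.succ this
            rwa [Fin.succ_pred, Fin.succ_pred] at h3
        · intro g hg
          have hgsm : StrictMono g := (Finset.mem_filter.mp hg).2
          have hsm : StrictMono (Fin.cons 0 (fun t => (g t).succ) : Fin (l+1) → Fin (m+1)) := by
            intro p q hpq
            induction p using Fin.cases with
            | zero =>
              induction q using Fin.cases with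
              | zero => exact absurd hpq (lt_irrefl _)
              | succ u => simpa using Fin.succ_pos (g u)
            | succ u =>
              induction q using Fin.cases with
              | zero => exact absurd hpq (Fin.not_lt_zero _)
              | succ v =>
                simp only [Fin.cons_succ]
                exact Fin.succ_lt_succ_iff.mpr (hgsm (Fin.succ_lt_succ_iff.mp hpq))
          refine ⟨Fin.cons 0 (fun t => (g t).succ),
            Finset.mem_filter.mpr ⟨Finset.mem_univ _, hsm, Fin.cons_zero _ _⟩, ?_⟩
          funext t
          simp only [Fin.cons_succ, Fin.pred_succ]
        · intro f hf
          have h := (Finset.mem_filter.mp hf).2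
          rw [Fin.prod_univ_succ]
          have h0 : x (f 0) = x 0 := by rw [h.2]
          have h0' : (((f 0 : ℕ) : ℤ) - (((0 : Fin (l+1)) : ℕ) : ℤ) + D) = D := by
            rw [h.2]; simp
          rw [h0, h0']
          congr 1
          refine Finset.prod_congr rfl fun t _ => ?_
          have hne : f t.succ ≠ 0 := by
            have h2 : f 0 < f t.succ := h.1 (Fin.succ_pos t)
            rw [h.2] at h2
            exact h2.ne'
          have hx : x ((f t.succ).pred hne).succ = x (f t.succ) := by rw [Fin.succ_pred]
          have hval : (1 : ℕ) ≤ (f t.succ : ℕ) := by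
            rcases Nat.eq_zero_or_pos (f t.succ : ℕ) with h3 | h3
            · exact absurd (Fin.ext (by simp [h3])) hne
            · exact h3
          have harg : ((((f t.succ).pred hne : ℕ) : ℤ) - ((t : ℕ) : ℤ) + D)
              = (((f t.succ : ℕ) : ℤ) - (((t.succ : Fin (l+1)) : ℕ) : ℤ) + D) := by
            rw [Fin.coe_pred, Fin.val_succ]
            omega
          rw [← hx, harg]
      have hB : ∑ f ∈ Finset.univ.filter (fun f : Fin (l+1) → Fin (m+1) => StrictMono f ∧ ¬ f 0 = 0),
          ∏ t : Fin (l+1), (x (f t) - a (((f t : ℕ) : ℤ) - ((t : ℕ) : ℤ) + D))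
          = eF a (D + 1) (List.ofFn (fun i => x i.succ)) (l + 1) := by
        rw [← ih (l + 1) (D + 1) (fun i => x i.succ)]
        have hne : ∀ (f : Fin (l+1) → Fin (m+1)),
            f ∈ Finset.univ.filter (fun f => StrictMono f ∧ ¬ f 0 = 0) → ∀ t, f t ≠ 0 := by
          intro f hf t
          have h := (Finset.mem_filter.mp hf).2
          have h2 : f 0 ≤ f t := h.1.monotone (Fin.zero_le t)
          have h3 : (0 : Fin (m+1)) < f 0 := Fin.pos_iff_ne_zero.mpr h.2
          exact (lt_of_lt_of_le h3 h2).ne'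
        refine Finset.sum_bij (fun f hf => fun t : Fin (l+1) => (f t).pred (hne f hf t)) ?_ ?_ ?_ ?_
        · intro f hf
          refine Finset.mem_filter.mpr ⟨Finset.mem_univ _, ?_⟩
          intro p q hpq
          exact Fin.pred_lt_pred_iff.mpr ((Finset.mem_filter.mp hf).2.1 hpq)
        · intro f₁ h₁ f₂ h₂ heq
          funext t
          have := congrFun heq t
          have h3 : ((f₁ t).pred _).succ = ((f₂ t).pred _).succ := congrArg Fin.succ this
          rwa [Fin.succ_pred, Fin.succ_pred] at h3
        · intro g hg
          have hgsm : StrictMono g := (Finset.mem_filter.mp hg).2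
          refine ⟨fun t => (g t).succ, Finset.mem_filter.mpr ⟨Finset.mem_univ _,
            fun p q hpq => Fin.succ_lt_succ_iff.mpr (hgsm hpq), Fin.succ_ne_zero _⟩, ?_⟩
          funext t
          simp only [Fin.pred_succ]
        · intro f hf
          refine Finset.prod_congr rfl fun t _ => ?_
          have hx : x ((f t).pred (hne f hf t)).succ = x (f t) := by rw [Fin.succ_pred]
          have hval : (1 : ℕ) ≤ (f t : ℕ) := by
            rcases Nat.eq_zero_or_pos (f t : ℕ) with h3 | h3
            · exact absurd (Fin.ext (by simp [h3])) (hne f hf t)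
            · exact h3
          have harg : ((((f t).pred (hne f hf t) : ℕ) : ℤ) - ((t : ℕ) : ℤ) + (D + 1))
              = (((f t : ℕ) : ℤ) - ((t : ℕ) : ℤ) + D) := by
            rw [Fin.coe_pred]
            omega
          rw [← hx, harg]
      rw [hA, hB, List.ofFn_succ, eF_cons]

end ColSchur

open scoped Classical in
/-- Evaluation of the column double Schur polynomial:
`s_{(1^l)}(a_{(1^k)}|a) = Σ_{1 ≤ i_1 < … < i_l ≤ n} ∏_{t=1}^{l} (x_{i_t} - a_{i_t-t+1})
  = (a_{n-l+2} - a_{n-k+1})(a_{n-l+3} - a_{n-k+1}) ⋯ (a_{n+1} - a_{n-k+1})`. -/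
theorem col_double_schur_evaluation (a : ℤ → ℂ) (n l k : ℕ)
    (hl : 1 ≤ l) (hlk : l ≤ k) (hkn : k ≤ n) :
    ∑ f ∈ Finset.univ.filter (fun f : Fin l → Fin n => StrictMono f),
        ∏ t : Fin l, (xCol a n k (f t) - a (((f t : ℕ) : ℤ) - ((t : ℕ) : ℤ) + 1)) =
      ∏ t : Fin l, (a ((n : ℤ) - l + 2 + (t : ℕ)) - a ((n : ℤ) - k + 1)) := by
  obtain ⟨l', rfl⟩ : ∃ l', l = l' + 1 := ⟨l - 1, by omega⟩
  rw [ColSchur.conn a n (l' + 1) 1 (xCol a n k)]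
  have hrev : (List.ofFn (xCol a n k)).reverse
      = (List.range n).map (fun i : ℕ => if i < n - k then a ((i : ℕ) + 1) else a ((i : ℕ) + 2)) := by
    apply List.ext_getElem
    · simp
    · intro i h1 h2
      have hi : i < n := by simpa using h2
      rw [List.getElem_reverse, List.getElem_map, List.getElem_range]
      simp only [List.length_ofFn, List.getElem_ofFn]
      simp only [xCol]
      split_ifs with hc1 hc2 hc2
      · exact absurd hc2 (by simp at hc1 ⊢; omega)
      · congr 1
        omega
      · congr 1
        omega
      · exact absurd hc2 (by simp at hc1 ⊢; omega)
  rw [ColSchur.eF_perm a (List.reverse_perm (List.ofFn (xCol a n k))).symm 1 (l' + 1), hrev]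
  have hck : n - k + k = n := Nat.sub_add_cancel hkn
  have hclosed := ColSchur.eF_closed a (n - k) k l'
  rw [hck] at hclosed
  rw [hclosed, Fin.prod_univ_eq_prod_range
    (fun t : ℕ => a ((n : ℤ) - (l' + 1 : ℕ) + 2 + (t : ℕ)) - a ((n : ℤ) - k + 1)) (l' + 1)]
  refine Finset.prod_congr rfl fun t _ => ?_
  have e1 : ((n - k : ℕ) : ℤ) + (k : ℕ) + 1 - (l' : ℕ) + (t : ℕ)
      = (n : ℤ) - ((l' + 1 : ℕ) : ℤ) + 2 + (t : ℕ) := by omega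
  have e2 : ((n - k : ℕ) : ℤ) + 1 = (n : ℤ) - (k : ℕ) + 1 := by omega
  rw [e1, e2]

end
end

section
/- (Commutation of the contraction operators with the classical groups.) Let Z ∈ M_N(ℂ). (i) If Z^T G Z = G for the symmetric form G with entries G_{ij} = δ_{i, N+1−j}, then for all m ≥ 2 and 1 ≤ a < b ≤ m the operator Z_1 Z_2 ⋯ Z_m = Z^{⊗m} on (ℂ^N)^{⊗m} commutes with the orthogonal contraction operator Q_{ab}. (ii) If N = 2n and Z^T G Z = G for the skew-symmetric form with entries G_{ij} = ε_i δ_{i, N+1−j}, then Z^{⊗m} commutes with the symplectic contraction operator Q_{ab}. -/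
open Finset

noncomputable section

/-- The operator `(X 0)_1 (X 1)_2 ⋯ (X (m-1))_m` on `(ℂ^N)^{⊗m}`. -/
def embAll {N m : ℕ} (X : Fin m → Matrix (Fin N) (Fin N) ℂ) :
    Matrix (Fin m → Fin N) (Fin m → Fin N) ℂ :=
  Matrix.of fun I J => ∏ a, X a (I a) (J a)

/-- The orthogonal contraction operator `Q_{ab} = Σ_{i,j} (e_{ij})_a (e_{i'j'})_b`,
where `i' = N+1-i` (which is `Fin.rev` in 0-indexed terms). -/
def Qo {N m : ℕ} (a b : Fin m) : Matrix (Fin m → Fin N) (Fin m → Fin N) ℂ :=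
  Matrix.of fun I J =>
    (if I b = (I a).rev ∧ J b = (J a).rev then (1 : ℂ) else 0) *
      ∏ c ∈ Finset.univ \ {a, b}, (if I c = J c then (1 : ℂ) else 0)

/-- `ε_i = 1` for `1 ≤ i ≤ n`, `ε_i = -1` for `n+1 ≤ i ≤ 2n` (0-indexed). -/
def epsSign (n : ℕ) (i : Fin (2 * n)) : ℂ := if (i : ℕ) < n then 1 else -1

/-- The symplectic contraction operator
`Q_{ab} = Σ_{i,j} ε_i ε_j (e_{ij})_a (e_{i'j'})_b`, where `i' = N+1-i`. -/
def Qsp {n m : ℕ} (a b : Fin m) :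
    Matrix (Fin m → Fin (2 * n)) (Fin m → Fin (2 * n)) ℂ :=
  Matrix.of fun I J =>
    epsSign n (I a) * epsSign n (J a) *
      (if I b = (I a).rev ∧ J b = (J a).rev then (1 : ℂ) else 0) *
      ∏ c ∈ Finset.univ \ {a, b}, (if I c = J c then (1 : ℂ) else 0)

/-- The symmetric bilinear form `G_{ij} = δ_{i, N+1-j}`. -/
def Gorth (N : ℕ) : Matrix (Fin N) (Fin N) ℂ :=
  Matrix.of fun i j => if j = i.rev then 1 else 0

/-- The skew-symmetric bilinear form `G_{ij} = ε_i δ_{i, N+1-j}`, `N = 2n`. -/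
def Gsp (n : ℕ) : Matrix (Fin (2 * n)) (Fin (2 * n)) ℂ :=
  Matrix.of fun i j => if j = i.rev then epsSign n i else 0

/-! ### Auxiliary material -/

/-- General form `G_{ij} = ε_i δ_{j, i'}`. -/
def Gform {N : ℕ} (ε : Fin N → ℂ) : Matrix (Fin N) (Fin N) ℂ :=
  Matrix.of fun i j => if j = i.rev then ε i else 0

/-- General contraction operator with weights `ε`. -/
def Qgen {N m : ℕ} (ε : Fin N → ℂ) (a b : Fin m) :
    Matrix (Fin m → Fin N) (Fin m → Fin N) ℂ :=
  Matrix.of fun I J =>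
    ε (I a) * ε (J a) *
      (if I b = (I a).rev ∧ J b = (J a).rev then (1 : ℂ) else 0) *
      ∏ c ∈ Finset.univ \ {a, b}, (if I c = J c then (1 : ℂ) else 0)

def phiFun {N m : ℕ} (a b : Fin m) (J : Fin m → Fin N) (k : Fin N) : Fin m → Fin N :=
  fun c => if c = a then k else if c = b then k.rev else J c

lemma Gform_sq {N : ℕ} (ε : Fin N → ℂ) (s : ℂ) (hε : ∀ i, ε i * ε i.rev = s) :
    Gform ε * Gform ε = s • 1 := by
  ext i k
  simp only [Gform, Matrix.mul_apply, Matrix.of_apply, Matrix.smul_apply, Matrix.one_apply,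
    ite_mul, zero_mul, Finset.sum_ite_eq', Finset.mem_univ, if_true, Fin.rev_rev, smul_eq_mul]
  by_cases h : k = i
  · simp [h, hε]
  · simp [h, Ne.symm h]

lemma flip_invariance {N : ℕ} (G Z : Matrix (Fin N) (Fin N) ℂ) (s : ℂ) (hs : s ≠ 0)
    (hGG : G * G = s • 1) (h : Z.transpose * G * Z = G) :
    Z * G * Z.transpose = G := by
  have h1 : Z.transpose * (s⁻¹ • (G * Z * G)) = 1 := by
    rw [Matrix.mul_smul, ← Matrix.mul_assoc, ← Matrix.mul_assoc, h, hGG,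
      smul_smul, inv_mul_cancel₀ hs, one_smul]
  have h2 : (s⁻¹ • (G * Z * G)) * Z.transpose = 1 := mul_eq_one_comm.mp h1
  have h3 : G * (Z * G * Z.transpose) = G * G := by
    calc G * (Z * G * Z.transpose) = (G * Z * G) * Z.transpose := by
          rw [← Matrix.mul_assoc, ← Matrix.mul_assoc]
      _ = s • ((s⁻¹ • (G * Z * G)) * Z.transpose) := by
          rw [Matrix.smul_mul, smul_smul, mul_inv_cancel₀ hs, one_smul]
      _ = s • (1 : Matrix (Fin N) (Fin N) ℂ) := by rw [h2]
      _ = G * G := hGG.symm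
  have h5 : G * (G * (Z * G * Z.transpose)) = G * (G * G) := congrArg _ h3
  rw [← Matrix.mul_assoc, ← Matrix.mul_assoc, hGG, Matrix.smul_mul, Matrix.smul_mul,
    Matrix.one_mul, Matrix.mul_smul, Matrix.mul_one] at h5
  exact smul_right_injective _ hs h5

lemma transpose_G_Z_entries {N : ℕ} (ε : Fin N → ℂ) (Z : Matrix (Fin N) (Fin N) ℂ)
    (h : Z.transpose * Gform ε * Z = Gform ε) :
    ∀ p q, ∑ k, Z k p * (ε k * Z k.rev q) = ε p * (if q = p.rev then 1 else 0) := by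
  intro p q
  have h' : (Z.transpose * (Gform ε * Z)) p q = Gform ε p q := by
    rw [← Matrix.mul_assoc, h]
  rw [Matrix.mul_apply] at h'
  have hin : ∀ k, (Gform ε * Z) k q = ε k * Z k.rev q := by
    intro k
    rw [Matrix.mul_apply]
    simp only [Gform, Matrix.of_apply, ite_mul, zero_mul, Finset.sum_ite_eq',
      Finset.mem_univ, if_true]
  simp only [hin, Matrix.transpose_apply] at h'
  rw [h']
  simp only [Gform, Matrix.of_apply]
  by_cases hq : q = p.rev <;> simp [hq]

lemma Z_G_transpose_entries {N : ℕ} (ε : Fin N → ℂ) (Z : Matrix (Fin N) (Fin N) ℂ)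
    (h : Z * Gform ε * Z.transpose = Gform ε) :
    ∀ p q, ∑ k, Z p k * (ε k * Z q k.rev) = ε p * (if q = p.rev then 1 else 0) := by
  intro p q
  have h' : (Z * (Gform ε * Z.transpose)) p q = Gform ε p q := by
    rw [← Matrix.mul_assoc, h]
  rw [Matrix.mul_apply] at h'
  have hin : ∀ k, (Gform ε * Z.transpose) k q = ε k * Z q k.rev := by
    intro k
    rw [Matrix.mul_apply]
    simp only [Gform, Matrix.of_apply, Matrix.transpose_apply, ite_mul, zero_mul,
      Finset.sum_ite_eq', Finset.mem_univ, if_true]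
  simp only [hin] at h'
  rw [h']
  simp only [Gform, Matrix.of_apply]
  by_cases hq : q = p.rev <;> simp [hq]

lemma epsSign_mul_rev (n : ℕ) (i : Fin (2 * n)) :
    epsSign n i * epsSign n i.rev = -1 := by
  have hi := i.isLt
  unfold epsSign
  rcases lt_or_ge (i : ℕ) n with h | h
  · rw [if_pos h, if_neg (by rw [Fin.val_rev]; omega)]; ring
  · rw [if_neg (by omega), if_pos (by rw [Fin.val_rev]; omega)]; ring

lemma phiFun_a {N m : ℕ} (a b : Fin m) (J : Fin m → Fin N) (k : Fin N) :
    phiFun a b J k a = k := by simp [phiFun]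

lemma phiFun_b {N m : ℕ} {a b : Fin m} (hab : a ≠ b) (J : Fin m → Fin N) (k : Fin N) :
    phiFun a b J k b = k.rev := by simp [phiFun, Ne.symm hab]

lemma phiFun_ne {N m : ℕ} {a b c : Fin m} (hca : c ≠ a) (hcb : c ≠ b)
    (J : Fin m → Fin N) (k : Fin N) : phiFun a b J k c = J c := by
  simp [phiFun, hca, hcb]

lemma sum_constrained {N m : ℕ} (a b : Fin m) (hab : a ≠ b) (J : Fin m → Fin N)
    (f : (Fin m → Fin N) → ℂ)
    (hf : ∀ K, ¬(K b = (K a).rev ∧ ∀ c, c ≠ a → c ≠ b → K c = J c) → f K = 0) :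
    ∑ K, f K = ∑ k, f (phiFun a b J k) := by
  classical
  have hinj : ∀ x ∈ Finset.univ, ∀ y ∈ Finset.univ,
      phiFun a b J x = phiFun a b J y → (x : Fin N) = y := by
    intro x _ y _ hxy
    have := congrFun hxy a
    rwa [phiFun_a, phiFun_a] at this
  rw [← Finset.sum_image (f := f) hinj]
  refine (Finset.sum_subset (Finset.subset_univ _) ?_).symm
  intro K _ hK
  apply hf
  rintro ⟨h1, h2⟩
  apply hK
  refine Finset.mem_image.mpr ⟨K a, Finset.mem_univ _, ?_⟩
  funext c
  by_cases hca : c = a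
  · subst hca; rw [phiFun_a]
  · by_cases hcb : c = b
    · subst hcb; rw [phiFun_b hab, h1]
    · rw [phiFun_ne hca hcb, h2 c hca hcb]

lemma mem_diff_pair {m : ℕ} {a b c : Fin m} (hc : c ∈ Finset.univ \ ({a, b} : Finset (Fin m))) :
    c ≠ a ∧ c ≠ b := by
  rw [Finset.mem_sdiff, Finset.mem_insert, Finset.mem_singleton] at hc
  push_neg at hc
  exact hc.2

lemma key_comm {N m : ℕ} (ε : Fin N → ℂ) (Z : Matrix (Fin N) (Fin N) ℂ)
    (h1 : ∀ p q, ∑ k, Z k p * (ε k * Z k.rev q) = ε p * (if q = p.rev then 1 else 0))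
    (h2 : ∀ p q, ∑ k, Z p k * (ε k * Z q k.rev) = ε p * (if q = p.rev then 1 else 0))
    (a b : Fin m) (hab : a ≠ b) :
    embAll (fun _ : Fin m => Z) * Qgen ε a b = Qgen ε a b * embAll (fun _ : Fin m => Z) := by
  classical
  ext I J
  rw [Matrix.mul_apply, Matrix.mul_apply]
  simp only [embAll, Qgen, Matrix.of_apply]
  set D : ℂ := ∏ c ∈ Finset.univ \ ({a, b} : Finset (Fin m)), Z (I c) (J c) with hD
  have hL : (∑ K : Fin m → Fin N, (∏ c, Z (I c) (K c)) *
      (ε (K a) * ε (J a) * (if K b = (K a).rev ∧ J b = (J a).rev then (1:ℂ) else 0) *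
        ∏ c ∈ Finset.univ \ {a, b}, (if K c = J c then (1:ℂ) else 0)))
      = (ε (I a) * (if I b = (I a).rev then 1 else 0)) *
        ((ε (J a) * (if J b = (J a).rev then 1 else 0)) * D) := by
    rw [sum_constrained a b hab J _ ?hvanish]
    case hvanish =>
      intro K hK
      push_neg at hK
      by_cases hKb : K b = (K a).rev
      · obtain ⟨c, hca, hcb, hc⟩ := hK hKb
        have hz : (∏ c ∈ Finset.univ \ ({a, b} : Finset (Fin m)),
            (if K c = J c then (1:ℂ) else 0)) = 0 := by
          refine Finset.prod_eq_zero (i := c) ?_ (if_neg hc)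
          simp [Finset.mem_sdiff, hca, hcb]
        rw [hz, mul_zero, mul_zero]
      · rw [if_neg (fun h => hKb h.1), mul_zero, zero_mul, mul_zero]
    have step : ∀ k ∈ Finset.univ, (∏ c, Z (I c) (phiFun a b J k c)) *
        (ε (phiFun a b J k a) * ε (J a) *
          (if phiFun a b J k b = (phiFun a b J k a).rev ∧ J b = (J a).rev then (1:ℂ) else 0) *
          ∏ c ∈ Finset.univ \ {a, b}, (if phiFun a b J k c = J c then (1:ℂ) else 0))
        = Z (I a) k * (ε k * Z (I b) k.rev) *
          ((ε (J a) * (if J b = (J a).rev then 1 else 0)) * D) := by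
      intro k _
      have hprod1 : (∏ c ∈ Finset.univ \ ({a, b} : Finset (Fin m)),
          (if phiFun a b J k c = J c then (1:ℂ) else 0)) = 1 := by
        refine Finset.prod_eq_one fun c hc => ?_
        obtain ⟨hca, hcb⟩ := mem_diff_pair hc
        rw [if_pos (phiFun_ne hca hcb J k)]
      have hsplit : (∏ c, Z (I c) (phiFun a b J k c)) = D * (Z (I a) k * Z (I b) k.rev) := by
        rw [← Finset.prod_sdiff (Finset.subset_univ ({a, b} : Finset (Fin m))),
          Finset.prod_pair hab, phiFun_a, phiFun_b hab]
        congr 1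
        refine Finset.prod_congr rfl fun c hc => ?_
        obtain ⟨hca, hcb⟩ := mem_diff_pair hc
        rw [phiFun_ne hca hcb]
      rw [hsplit, hprod1, phiFun_a, phiFun_b hab]
      simp only [eq_self_iff_true, true_and]
      ring
    rw [Finset.sum_congr rfl step, ← Finset.sum_mul, h2 (I a) (I b)]
  have hR : (∑ K : Fin m → Fin N,
      (ε (I a) * ε (K a) * (if I b = (I a).rev ∧ K b = (K a).rev then (1:ℂ) else 0) *
        ∏ c ∈ Finset.univ \ {a, b}, (if I c = K c then (1:ℂ) else 0)) *
      ∏ c, Z (K c) (J c))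
      = (ε (J a) * (if J b = (J a).rev then 1 else 0)) *
        ((ε (I a) * (if I b = (I a).rev then 1 else 0)) * D) := by
    rw [sum_constrained a b hab I _ ?hvanish]
    case hvanish =>
      intro K hK
      push_neg at hK
      by_cases hKb : K b = (K a).rev
      · obtain ⟨c, hca, hcb, hc⟩ := hK hKb
        have hz : (∏ c ∈ Finset.univ \ ({a, b} : Finset (Fin m)),
            (if I c = K c then (1:ℂ) else 0)) = 0 := by
          refine Finset.prod_eq_zero (i := c) ?_ (if_neg fun h => hc h.symm)
          simp [Finset.mem_sdiff, hca, hcb]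
        rw [hz, mul_zero, zero_mul]
      · rw [if_neg (fun h => hKb h.2), mul_zero, zero_mul, zero_mul]
    have step : ∀ k ∈ Finset.univ,
        (ε (I a) * ε (phiFun a b I k a) *
          (if I b = (I a).rev ∧ phiFun a b I k b = (phiFun a b I k a).rev then (1:ℂ) else 0) *
          ∏ c ∈ Finset.univ \ {a, b}, (if I c = phiFun a b I k c then (1:ℂ) else 0)) *
        (∏ c, Z (phiFun a b I k c) (J c))
        = Z k (J a) * (ε k * Z k.rev (J b)) *
          ((ε (I a) * (if I b = (I a).rev then 1 else 0)) * D) := by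
      intro k _
      have hprod1 : (∏ c ∈ Finset.univ \ ({a, b} : Finset (Fin m)),
          (if I c = phiFun a b I k c then (1:ℂ) else 0)) = 1 := by
        refine Finset.prod_eq_one fun c hc => ?_
        obtain ⟨hca, hcb⟩ := mem_diff_pair hc
        rw [if_pos (phiFun_ne hca hcb I k).symm]
      have hsplit : (∏ c, Z (phiFun a b I k c) (J c)) = D * (Z k (J a) * Z k.rev (J b)) := by
        rw [← Finset.prod_sdiff (Finset.subset_univ ({a, b} : Finset (Fin m))),
          Finset.prod_pair hab, phiFun_a, phiFun_b hab]
        congr 1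
        refine Finset.prod_congr rfl fun c hc => ?_
        obtain ⟨hca, hcb⟩ := mem_diff_pair hc
        rw [phiFun_ne hca hcb]
      rw [hsplit, hprod1, phiFun_a, phiFun_b hab]
      simp only [eq_self_iff_true, and_true]
      ring
    rw [Finset.sum_congr rfl step, ← Finset.sum_mul, h1 (J a) (J b)]
  rw [hL, hR]
  ring

lemma Qo_eq_Qgen {N m : ℕ} (a b : Fin m) :
    (Qo a b : Matrix (Fin m → Fin N) (Fin m → Fin N) ℂ) = Qgen (fun _ => 1) a b := by
  ext I J
  simp [Qo, Qgen]

lemma Qsp_eq_Qgen {n m : ℕ} (a b : Fin m) :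
    (Qsp a b : Matrix (Fin m → Fin (2 * n)) (Fin m → Fin (2 * n)) ℂ)
      = Qgen (epsSign n) a b := rfl

/-- If `Z` preserves the symmetric (resp. skew-symmetric) form, then
`Z^{⊗m} = Z_1 Z_2 ⋯ Z_m` commutes with the orthogonal (resp. symplectic)
contraction operator `Q_{ab}`. -/
theorem tensor_power_commutes_with_contraction :
    (∀ (N m : ℕ) (Z : Matrix (Fin N) (Fin N) ℂ),
      Z.transpose * Gorth N * Z = Gorth N → 2 ≤ m → ∀ a b : Fin m, a < b →
        embAll (fun _ : Fin m => Z) * Qo a b = Qo a b * embAll (fun _ : Fin m => Z)) ∧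
    (∀ (n m : ℕ) (Z : Matrix (Fin (2 * n)) (Fin (2 * n)) ℂ),
      Z.transpose * Gsp n * Z = Gsp n → 2 ≤ m → ∀ a b : Fin m, a < b →
        embAll (fun _ : Fin m => Z) * Qsp a b = Qsp a b * embAll (fun _ : Fin m => Z)) := by
  constructor
  · intro N m Z hZ _ a b hab
    have hG : Gorth N = Gform (fun _ => 1) := rfl
    rw [hG] at hZ
    have hGG : Gform (fun _ : Fin N => (1 : ℂ)) * Gform (fun _ => 1) = (1 : ℂ) • 1 :=
      Gform_sq _ 1 (fun _ => one_mul 1)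
    have hflip := flip_invariance _ Z 1 one_ne_zero hGG hZ
    have h1 := transpose_G_Z_entries _ Z hZ
    have h2 := Z_G_transpose_entries _ Z hflip
    rw [Qo_eq_Qgen]
    exact key_comm _ Z h1 h2 a b (ne_of_lt hab)
  · intro n m Z hZ _ a b hab
    have hG : Gsp n = Gform (epsSign n) := rfl
    rw [hG] at hZ
    have hGG : Gform (epsSign n) * Gform (epsSign n) = (-1 : ℂ) • 1 :=
      Gform_sq _ (-1) (epsSign_mul_rev n)
    have hflip := flip_invariance _ Z (-1) (by norm_num) hGG hZ
    have h1 := transpose_G_Z_entries _ Z hZ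
    have h2 := Z_G_transpose_entries _ Z hflip
    rw [Qsp_eq_Qgen]
    exact key_comm _ Z h1 h2 a b (ne_of_lt hab)

end
end
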